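/- arXiv:2405.06871 — 6 statements merged into one kernel-verified Lean document; each statement's English description precedes it below -/
import Mathlib

section
/- Let U satisfy A1 and be strongly convex outside a ball with constants m, R > 0 (assumption A2). Then for every m' with 0 < m' < m there exists a constant C₀ > 0 (depending on m, m', R, C₁ and d) such that ⟨x, ∇U(x)⟩ ≥ m'|x|² − C₀ for all x ∈ ℝ^d. -/
set_option maxHeartbeats 1000000


open RealInnerProductSpace

/-- Under A1 and A2 (strong convexity outside a ball with constants `m, R > 0`),
for every `0 < m' < m` there exists `C₀ > 0` such that
`⟨x, ∇U(x)⟩ ≥ m'|x|² − C₀` for all `x ∈ ℝ^d`. -/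
theorem statement0 (d : ℕ) (hd : 1 ≤ d) (U : EuclideanSpace ℝ (Fin d) → ℝ)
    (C₁ m R : ℝ) (hC₁ : 0 < C₁) (hm : 0 < m) (hR : 0 < R)
    -- A1
    (hU : ContDiff ℝ 3 U)
    (hU0 : ∀ x, |U x| ≤ C₁ * (‖x‖ + 1) ^ 2)
    (hU1 : ∀ x, ‖gradient U x‖ ≤ C₁ * (‖x‖ + 1))
    (hU2 : ∀ x, ‖iteratedFDeriv ℝ 2 U x‖ ≤ C₁)
    (hU3 : ∀ x, ‖iteratedFDeriv ℝ 3 U x‖ ≤ C₁)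
    -- A2: strong convexity outside the ball of radius R
    (hconv : ∀ x, R ≤ ‖x‖ → ∀ y, m * ‖y‖ ^ 2 ≤ iteratedFDeriv ℝ 2 U x ![y, y]) :
    ∀ m', 0 < m' → m' < m → ∃ C₀ > 0, ∀ x : EuclideanSpace ℝ (Fin d),
      m' * ‖x‖ ^ 2 - C₀ ≤ ⟪x, gradient U x⟫ := by
  intro m' hm'0 hm'm
  have hδ : 0 < m - m' := by linarith
  set K : ℝ := m * R + C₁ * (R + 1) with hKdef
  have hK0 : 0 < K := by positivity
  set C₀ : ℝ := K ^ 2 / (4 * (m - m')) + m' * R ^ 2 + C₁ * R * (R + 1) + 1 with hC₀def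
  have hC₀pos : 0 < C₀ := by positivity
  refine ⟨C₀, hC₀pos, ?_⟩
  have hfd2 : ContDiff ℝ 2 (fderiv ℝ U) := hU.fderiv_right (by norm_num)
  have hfd : Differentiable ℝ (fderiv ℝ U) := hfd2.differentiable (by norm_num)
  have hinner : ∀ y z : EuclideanSpace ℝ (Fin d), ⟪z, gradient U y⟫ = fderiv ℝ U y z := by
    intro y z
    rw [real_inner_comm]
    exact InnerProductSpace.toDual_symm_apply
  intro x
  by_cases hx : ‖x‖ < R
  · -- inside the ball
    have habs := abs_real_inner_le_norm x (gradient U x)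
    have h1 := hU1 x
    have hxn : (0:ℝ) ≤ ‖x‖ := norm_nonneg x
    have hgn : (0:ℝ) ≤ ‖gradient U x‖ := norm_nonneg _
    have hKd : (0:ℝ) ≤ K ^ 2 / (4 * (m - m')) := by positivity
    have h2 : -(‖x‖ * ‖gradient U x‖) ≤ ⟪x, gradient U x⟫ := neg_le_of_abs_le habs
    have h1' : ‖gradient U x‖ ≤ C₁ * (R + 1) := le_trans h1 (by nlinarith)
    have h5 : ‖x‖ * ‖gradient U x‖ ≤ R * (C₁ * (R + 1)) :=
      mul_le_mul hx.le h1' hgn hR.le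
    have h6 : ‖x‖ ^ 2 ≤ R ^ 2 := by nlinarith
    rw [hC₀def]
    nlinarith [mul_le_mul_of_nonneg_left h6 hm'0.le]
  · -- outside the ball
    push_neg at hx
    have hx0 : 0 < ‖x‖ := lt_of_lt_of_le hR hx
    set t₀ : ℝ := R / ‖x‖ with ht₀def
    have ht₀pos : 0 < t₀ := by positivity
    have ht₀le : t₀ ≤ 1 := by
      rw [ht₀def, div_le_one hx0]; exact hx
    set g : ℝ → ℝ := fun t => fderiv ℝ U (t • x) x with hgdef
    have hg : ∀ t : ℝ, HasDerivAt g (iteratedFDeriv ℝ 2 U (t • x) ![x, x]) t := by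
      intro t
      have h1 : HasDerivAt (fun t : ℝ => t • x) x t := by
        simpa using (hasDerivAt_id t).smul_const x
      have h2 : HasFDerivAt (fun y => fderiv ℝ U y x)
          ((ContinuousLinearMap.apply ℝ ℝ x).comp (fderiv ℝ (fderiv ℝ U) (t • x))) (t • x) :=
        (ContinuousLinearMap.apply ℝ ℝ x).hasFDerivAt.comp _ (hfd (t • x)).hasFDerivAt
      have h3 := h2.comp_hasDerivAt t h1
      rw [iteratedFDeriv_two_apply]
      exact h3
    set h : ℝ → ℝ := fun t => g t - m * ‖x‖ ^ 2 * t with hhdef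
    have hh : ∀ t : ℝ, HasDerivAt h (iteratedFDeriv ℝ 2 U (t • x) ![x, x] - m * ‖x‖ ^ 2) t := by
      intro t
      have hlin : HasDerivAt (fun t : ℝ => m * ‖x‖ ^ 2 * t) (m * ‖x‖ ^ 2) t := by
        simpa using (hasDerivAt_id t).const_mul (m * ‖x‖ ^ 2)
      exact (hg t).sub hlin
    have hmono : MonotoneOn h (Set.Icc t₀ 1) := by
      apply monotoneOn_of_deriv_nonneg (convex_Icc _ _)
      · exact fun t _ => (hh t).differentiableAt.continuousAt.continuousWithinAt
      · intro t ht
        exact (hh t).differentiableAt.differentiableWithinAt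
      · intro t ht
        rw [interior_Icc] at ht
        rw [(hh t).deriv]
        have htpos : 0 < t := lt_trans ht₀pos ht.1
        have hnorm : R ≤ ‖t • x‖ := by
          rw [norm_smul, Real.norm_eq_abs, abs_of_pos htpos]
          calc R = t₀ * ‖x‖ := by rw [ht₀def]; field_simp
            _ ≤ t * ‖x‖ := mul_le_mul_of_nonneg_right ht.1.le hx0.le
        have := hconv (t • x) hnorm x
        linarith
    have hmle : h t₀ ≤ h 1 :=
      hmono (Set.mem_Icc.2 ⟨le_refl _, ht₀le⟩) (Set.mem_Icc.2 ⟨ht₀le, le_refl _⟩) ht₀le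
    -- bound on g t₀
    have hnt₀ : ‖t₀ • x‖ = R := by
      rw [norm_smul, Real.norm_eq_abs, abs_of_pos ht₀pos, ht₀def]
      field_simp
    have hg0 : -(C₁ * (R + 1) * ‖x‖) ≤ g t₀ := by
      have h1 : g t₀ = ⟪x, gradient U (t₀ • x)⟫ := (hinner (t₀ • x) x).symm
      have h2 := neg_le_of_abs_le (abs_real_inner_le_norm x (gradient U (t₀ • x)))
      have h3 := hU1 (t₀ • x)
      rw [hnt₀] at h3
      have h4 : ‖x‖ * ‖gradient U (t₀ • x)‖ ≤ ‖x‖ * (C₁ * (R + 1)) :=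
        mul_le_mul_of_nonneg_left h3 (norm_nonneg x)
      rw [h1]
      nlinarith
    -- conclude
    have hgx : ⟪x, gradient U x⟫ = g 1 := by
      rw [hinner x x]
      simp [hgdef]
    have ht₀x : ‖x‖ ^ 2 * t₀ = R * ‖x‖ := by
      rw [ht₀def, pow_two, mul_comm ‖x‖ ‖x‖, mul_assoc, mul_div_cancel₀ _ hx0.ne', mul_comm]
    have key : m * ‖x‖ ^ 2 - K * ‖x‖ ≤ ⟪x, gradient U x⟫ := by
      rw [hgx, hKdef]
      simp only [hhdef] at hmle
      nlinarith [hmle, hg0, ht₀x]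
    clear_value K
    have h4pos : (0:ℝ) < 4 * (m - m') := by linarith
    have h4 : 4 * (m - m') * ((m - m') * ‖x‖ ^ 2 - K * ‖x‖ + K ^ 2 / (4 * (m - m'))) =
        (2 * (m - m') * ‖x‖ - K) ^ 2 := by
      field_simp
      ring
    have hq : 0 ≤ (m - m') * ‖x‖ ^ 2 - K * ‖x‖ + K ^ 2 / (4 * (m - m')) := by
      nlinarith [sq_nonneg (2 * (m - m') * ‖x‖ - K), h4, h4pos]
    have hextra : (0:ℝ) ≤ m' * R ^ 2 + C₁ * R * (R + 1) + 1 := by positivity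
    rw [hC₀def]
    linarith [key, hq, hextra]
end

section
/- Assume A1 and A2 and let H(x,v) = γ|x|² + 2⟨x,v⟩ + |v|². There exists γ₀ > 0 such that for every γ ≥ γ₀ there exist constants a, b > 0 with −2((γ−1)|v|² + ⟨x,∇U(x)⟩ + ⟨v,∇U(x)⟩) + 2γd ≤ −a·H(x,v) + b for all x, v ∈ ℝ^d. (The left-hand side is the generator L = v·∇_x − (∇U(x)+γv)·∇_v + γΔ_v of the underdamped Langevin dynamics applied to H, so this is the Lyapunov inequality LH ≤ −aH + b.) -/
open RealInnerProductSpace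

/-- Lower bound `⟪x, ∇U x⟫ ≥ (m/2)‖x‖² - K` derived from strong convexity outside a ball. -/
lemma grad_lower_bound {d : ℕ} (U : EuclideanSpace ℝ (Fin d) → ℝ)
    (C₁ m R : ℝ) (hC₁ : 0 < C₁) (hm : 0 < m) (hR : 0 < R)
    (hU : ContDiff ℝ 3 U)
    (hU1 : ∀ x, ‖gradient U x‖ ≤ C₁ * (‖x‖ + 1))
    (hconv : ∀ x, R ≤ ‖x‖ → ∀ y, m * ‖y‖ ^ 2 ≤ iteratedFDeriv ℝ 2 U x ![y, y])
    (x : EuclideanSpace ℝ (Fin d)) :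
    m/2 * ‖x‖^2 - ((m*R + C₁*(R+1))^2/(2*m) + C₁*(R+1)*R + m/2*R^2)
      ≤ ⟪x, gradient U x⟫ := by
  have hgrad : ∀ z y : EuclideanSpace ℝ (Fin d), ⟪y, gradient U z⟫ = fderiv ℝ U z y := by
    intro z y
    rw [real_inner_comm, gradient, InnerProductSpace.toDual_symm_apply]
  have hQ : 0 ≤ (m*R + C₁*(R+1))^2/(2*m) := div_nonneg (sq_nonneg _) (by linarith)
  have hp1 : 0 ≤ C₁*(R+1)*R := le_of_lt (mul_pos (mul_pos hC₁ (by linarith)) hR)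
  have hp2 : 0 ≤ m/2*R^2 := mul_nonneg (by linarith) (sq_nonneg R)
  rcases le_or_gt R ‖x‖ with hx | hx
  · -- outside the ball: mean value theorem along the ray
    have hxpos : 0 < ‖x‖ := lt_of_lt_of_le hR hx
    set t₀ := R / ‖x‖ with ht₀
    have ht₀pos : 0 < t₀ := div_pos hR hxpos
    have ht₀le : t₀ ≤ 1 := (div_le_one hxpos).mpr hx
    have hC2 : ContDiff ℝ 2 (fderiv ℝ U) := hU.fderiv_right (by norm_num)
    have hdU : Differentiable ℝ (fderiv ℝ U) := hC2.differentiable two_ne_zero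
    set g : ℝ → ℝ := fun t => fderiv ℝ U (t • x) x - m * ‖x‖^2 * t with hg
    have hgderiv : ∀ t : ℝ, HasDerivAt g
        (fderiv ℝ (fderiv ℝ U) (t • x) x x - m * ‖x‖^2) t := by
      intro t
      have hline : HasDerivAt (fun s : ℝ => s • x) x t := by
        simpa using (hasDerivAt_id t).smul_const x
      have hF : HasFDerivAt (fderiv ℝ U) (fderiv ℝ (fderiv ℝ U) (t • x)) (t • x) :=
        (hdU (t • x)).hasFDerivAt
      have hcomp : HasDerivAt (fun s : ℝ => fderiv ℝ U (s • x))
          (fderiv ℝ (fderiv ℝ U) (t • x) x) t := hF.comp_hasDerivAt t hline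
      have h2 := (hcomp.clm_apply (hasDerivAt_const t x)).sub
        ((hasDerivAt_id t).const_mul (m * ‖x‖^2))
      simp only [map_zero, add_zero, mul_one] at h2
      exact h2
    have hmono : MonotoneOn g (Set.Icc t₀ 1) := by
      apply monotoneOn_of_deriv_nonneg (convex_Icc _ _)
      · exact fun t _ => ((hgderiv t).continuousAt).continuousWithinAt
      · exact fun t ht => ((hgderiv t).differentiableAt).differentiableWithinAt
      · intro t ht
        rw [interior_Icc] at ht
        rw [(hgderiv t).deriv]
        have htpos : 0 < t := lt_trans ht₀pos ht.1
        have hnorm : R ≤ ‖t • x‖ := by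
          rw [norm_smul, Real.norm_eq_abs, abs_of_pos htpos]
          have hne : R = t₀ * ‖x‖ := by rw [ht₀, div_mul_cancel₀ _ hxpos.ne']
          rw [hne]
          exact mul_le_mul_of_nonneg_right ht.1.le (norm_nonneg x)
        have h3 := hconv (t • x) hnorm x
        rw [iteratedFDeriv_two_apply] at h3
        simp only [Matrix.cons_val_zero, Matrix.cons_val_one, Matrix.head_cons] at h3
        linarith
    have hkey := hmono (Set.left_mem_Icc.mpr ht₀le) (Set.right_mem_Icc.mpr ht₀le) ht₀le
    simp only [hg, one_smul, mul_one] at hkey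
    have hnt₀ : ‖t₀ • x‖ = R := by
      rw [norm_smul, Real.norm_eq_abs, abs_of_pos ht₀pos, ht₀,
        div_mul_cancel₀ _ hxpos.ne']
    have hb : |fderiv ℝ U (t₀ • x) x| ≤ ‖x‖ * (C₁*(R+1)) := by
      rw [← hgrad]
      refine (abs_real_inner_le_norm _ _).trans ?_
      have h4 := hU1 (t₀ • x)
      rw [hnt₀] at h4
      exact mul_le_mul_of_nonneg_left h4 (norm_nonneg x)
    have ht₀x : m * ‖x‖^2 * t₀ = m * R * ‖x‖ := by
      have hne : ‖x‖ ≠ 0 := hxpos.ne'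
      rw [ht₀]; field_simp
    have hfin : m*‖x‖^2 - (m*R + C₁*(R+1))*‖x‖ ≤ ⟪x, gradient U x⟫ := by
      rw [hgrad]
      have := abs_le.mp hb
      nlinarith [hkey, this.1, ht₀x]
    have hdiv : (m*R + C₁*(R+1))*‖x‖ - m/2*‖x‖^2 ≤ (m*R + C₁*(R+1))^2/(2*m) := by
      rw [le_div_iff₀ (by linarith : (0:ℝ) < 2*m)]
      nlinarith [sq_nonneg (m*‖x‖ - (m*R + C₁*(R+1)))]
    linarith
  · -- inside the ball
    have hb : |⟪x, gradient U x⟫| ≤ ‖x‖ * (C₁*(‖x‖+1)) := by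
      refine (abs_real_inner_le_norm _ _).trans ?_
      exact mul_le_mul_of_nonneg_left (hU1 x) (norm_nonneg x)
    have hmono2 : ‖x‖ * (C₁*(‖x‖+1)) ≤ C₁*(R+1)*R := by
      nlinarith [mul_nonneg (mul_nonneg hC₁.le (by linarith [hx.le] : (0:ℝ) ≤ R - ‖x‖))
        (by linarith [norm_nonneg x] : (0:ℝ) ≤ R + ‖x‖ + 1)]
    have hsq : m/2*‖x‖^2 ≤ m/2*R^2 := by
      nlinarith [mul_nonneg (by linarith : (0:ℝ) ≤ m)
        (by nlinarith [norm_nonneg x] : (0:ℝ) ≤ R^2 - ‖x‖^2)]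
    have := abs_le.mp hb
    linarith

set_option maxHeartbeats 1000000 in
/-- Under A1 and A2, with `H(x,v) = γ|x|² + 2⟨x,v⟩ + |v|²`, there exists
`γ₀ > 0` such that for every `γ ≥ γ₀` there are `a, b > 0` with
`−2((γ−1)|v|² + ⟨x,∇U(x)⟩ + ⟨v,∇U(x)⟩) + 2γd ≤ −a·H(x,v) + b` for all `x, v ∈ ℝ^d`
(the Lyapunov inequality `LH ≤ −aH + b` for the underdamped Langevin generator). -/
theorem statement2 (d : ℕ) (hd : 1 ≤ d) (U : EuclideanSpace ℝ (Fin d) → ℝ)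
    (C₁ m R : ℝ) (hC₁ : 0 < C₁) (hm : 0 < m) (hR : 0 < R)
    -- A1
    (hU : ContDiff ℝ 3 U)
    (hU0 : ∀ x, |U x| ≤ C₁ * (‖x‖ + 1) ^ 2)
    (hU1 : ∀ x, ‖gradient U x‖ ≤ C₁ * (‖x‖ + 1))
    (hU2 : ∀ x, ‖iteratedFDeriv ℝ 2 U x‖ ≤ C₁)
    (hU3 : ∀ x, ‖iteratedFDeriv ℝ 3 U x‖ ≤ C₁)
    -- A2: strong convexity outside the ball of radius R
    (hconv : ∀ x, R ≤ ‖x‖ → ∀ y, m * ‖y‖ ^ 2 ≤ iteratedFDeriv ℝ 2 U x ![y, y]) :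
    ∃ γ₀ > 0, ∀ γ ≥ γ₀, ∃ a > 0, ∃ b > 0, ∀ x v : EuclideanSpace ℝ (Fin d),
      -2 * ((γ - 1) * ‖v‖ ^ 2 + ⟪x, gradient U x⟫ + ⟪v, gradient U x⟫) + 2 * γ * d ≤
        -a * (γ * ‖x‖ ^ 2 + 2 * ⟪x, v⟫ + ‖v‖ ^ 2) + b := by
  have key := grad_lower_bound U C₁ m R hC₁ hm hR hU hU1 hconv
  set K : ℝ := (m*R + C₁*(R+1))^2/(2*m) + C₁*(R+1)*R + m/2*R^2 with hKdef
  have hK : 0 ≤ K := by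
    have h1 : 0 ≤ (m*R + C₁*(R+1))^2/(2*m) := div_nonneg (sq_nonneg _) (by linarith)
    have h2 : 0 ≤ C₁*(R+1)*R := le_of_lt (mul_pos (mul_pos hC₁ (by linarith)) hR)
    have h3 : 0 ≤ m/2*R^2 := mul_nonneg (by linarith) (sq_nonneg R)
    rw [hKdef]; linarith
  set D : ℝ := 4*C₁^2/m with hDdef
  have hDpos : 0 < D := div_pos (by nlinarith) hm
  have hDm : D * m = 4*C₁^2 := div_mul_cancel₀ _ (ne_of_gt hm)
  refine ⟨2 + D/2, by linarith, fun γ hγ => ?_⟩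
  have hγ1 : (0:ℝ) < γ + 1 := by linarith
  refine ⟨min ((2*γ - 3 - D)/2) (3*m/(4*(γ+1))),
    lt_min (by linarith) (div_pos (by linarith) (by linarith)),
    2*K + C₁^2 + 2*γ*(d:ℝ) + 1, ?_, fun x v => ?_⟩
  · have : (0:ℝ) ≤ 2*γ*(d:ℝ) :=
      mul_nonneg (by linarith) (Nat.cast_nonneg d)
    nlinarith [sq_nonneg C₁]
  · set a : ℝ := min ((2*γ - 3 - D)/2) (3*m/(4*(γ+1))) with hadef
    have hapos : 0 < a := lt_min (by linarith) (div_pos (by linarith) (by linarith))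
    have ha1 : 2*a ≤ 2*γ - 3 - D := by
      have := min_le_left ((2*γ - 3 - D)/2) (3*m/(4*(γ+1)))
      rw [← hadef] at this; linarith
    have ha2 : a*(4*(γ+1)) ≤ 3*m := by
      have h := min_le_right ((2*γ - 3 - D)/2) (3*m/(4*(γ+1)))
      rw [← hadef, le_div_iff₀ (by linarith : (0:ℝ) < 4*(γ+1))] at h
      linarith
    have hG := key x
    have hGv := abs_le.mp ((abs_real_inner_le_norm v (gradient U x)).trans
      (mul_le_mul_of_nonneg_left (hU1 x) (norm_nonneg v)))
    have hP := abs_le.mp (abs_real_inner_le_norm x v)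
    have h2P : 2*⟪x, v⟫ ≤ ‖x‖^2 + ‖v‖^2 := by nlinarith [sq_nonneg (‖x‖ - ‖v‖), hP.2]
    have hA1 : 0 ≤ a*(‖x‖^2 + ‖v‖^2 - 2*⟪x, v⟫) := mul_nonneg hapos.le (by linarith)
    have hX2 : a*(4*(γ+1))*‖x‖^2 ≤ 3*m*‖x‖^2 := mul_le_mul_of_nonneg_right ha2 (sq_nonneg _)
    have hV2 : 2*a*‖v‖^2 ≤ (2*γ - 3 - D)*‖v‖^2 := mul_le_mul_of_nonneg_right ha1 (sq_nonneg _)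
    have hDV : m*(D*‖v‖^2) = 4*C₁^2*‖v‖^2 := by
      rw [show m*(D*‖v‖^2) = D*m*‖v‖^2 from by ring, hDm]
    have h1 : 0 ≤ m*(m/4*‖x‖^2 - 2*C₁*‖v‖*‖x‖ + D*‖v‖^2) := by
      nlinarith [sq_nonneg (m/2*‖x‖ - 2*C₁*‖v‖), hDV]
    have h1' : (0:ℝ) ≤ m/4*‖x‖^2 - 2*C₁*‖v‖*‖x‖ + D*‖v‖^2 :=
      le_of_mul_le_mul_left (by linarith) hm
    have hrem : (0:ℝ) ≤ m/4*‖x‖^2 - 2*C₁*‖v‖*‖x‖ + D*‖v‖^2 + ‖v‖^2 - 2*C₁*‖v‖ + C₁^2 + 1 := by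
      linarith [h1', sq_nonneg (‖v‖ - C₁)]
    clear_value a D K
    linarith only [hG, hGv.1, hA1, hX2, hV2, hrem]
end

section
/- Let d ≥ 1, 0 < m ≤ C₁, and γ ≥ C₁ + 1. Let S be the 2d×2d block matrix [[γI_d, I_d],[I_d, I_d]]. Then there exists λ > 0, depending only on m, C₁ and γ, such that for every symmetric matrix H ∈ ℝ^{d×d} with mI_d ⪯ H ⪯ C₁I_d, the block matrix A = [[0_d, −I_d],[H, γI_d]] satisfies: SA + AᵀS = [[2H, H],[H, 2(γ−1)I_d]], this matrix is ⪰ [[mI_d, 0_d],[0_d, C₁I_d]], and consequently SA + AᵀS − λS is positive semidefinite. -/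
open Matrix

section Helpers

set_option linter.unusedSectionVars false

variable {n : Type*} [Fintype n] [DecidableEq n]

lemma psd_add {A B : Matrix n n ℝ} (hA : A.PosSemidef) (hB : B.PosSemidef) :
    (A + B).PosSemidef :=
  ⟨hA.1.add hB.1, fun x => by
    simpa [mul_add, add_mul] using add_nonneg (hA.2 x) (hB.2 x)⟩

lemma psd_smul {A : Matrix n n ℝ} (hA : A.PosSemidef) {c : ℝ} (hc : 0 ≤ c) :
    (c • A).PosSemidef := by
  refine ⟨?_, fun x => ?_⟩
  · rw [Matrix.IsHermitian, conjTranspose_smul, hA.1.eq, star_trivial]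
  · exact (hA.smul hc).2 x

lemma psd_fromBlocks_diag {P Q : Matrix n n ℝ} (hP : P.PosSemidef) (hQ : Q.PosSemidef) :
    (fromBlocks P 0 0 Q).PosSemidef := by
  have h1 := hP.conjTranspose_mul_mul_same (fromCols (1 : Matrix n n ℝ) (0 : Matrix n n ℝ))
  have h2 := hQ.conjTranspose_mul_mul_same (fromCols (0 : Matrix n n ℝ) (1 : Matrix n n ℝ))
  rw [conjTranspose_fromCols_eq_fromRows_conjTranspose, fromRows_mul, fromRows_mul_fromCols] at h1 h2
  convert h1.add h2 using 1
  simp [fromBlocks_add]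

lemma psd_fromBlocks_same {P : Matrix n n ℝ} (hP : P.PosSemidef) :
    (fromBlocks P P P P).PosSemidef := by
  have h1 := hP.conjTranspose_mul_mul_same (fromCols (1 : Matrix n n ℝ) (1 : Matrix n n ℝ))
  rw [conjTranspose_fromCols_eq_fromRows_conjTranspose, fromRows_mul, fromRows_mul_fromCols] at h1
  simpa using h1

lemma psd_fromBlocks_scalar (a b c : ℝ) (ha : 0 ≤ a) (hc : 0 ≤ c) (h : b ^ 2 ≤ a * c) :
    (fromBlocks (a • 1) (b • 1) (b • 1) (c • 1) : Matrix (n ⊕ n) (n ⊕ n) ℝ).PosSemidef := by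
  rcases eq_or_lt_of_le ha with h0 | ha'
  · have hb : b = 0 := by nlinarith
    rw [← h0, hb]
    simpa using psd_fromBlocks_diag Matrix.PosSemidef.zero
      (psd_smul Matrix.PosSemidef.one hc)
  · set s : ℝ := Real.sqrt (a * c - b ^ 2) with hs_def
    have hs : s * s = a * c - b * b := by
      have := Real.sq_sqrt (show (0:ℝ) ≤ a * c - b ^ 2 by nlinarith)
      nlinarith [this]
    set L : Matrix (n ⊕ n) (n ⊕ n) ℝ := fromBlocks (a • 1) (b • 1) 0 (s • 1) with hL
    have key : Lᴴ * L = fromBlocks ((a * a) • (1 : Matrix n n ℝ)) ((a * b) • 1)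
        ((a * b) • 1) ((a * c) • 1) := by
      rw [hL, fromBlocks_conjTranspose, fromBlocks_multiply]
      simp only [conjTranspose_smul, conjTranspose_one, conjTranspose_zero,
        Matrix.smul_mul, Matrix.mul_smul, Matrix.one_mul, Matrix.mul_one,
        Matrix.zero_mul, Matrix.mul_zero, smul_smul, add_zero, zero_add,
        smul_zero, star_trivial]
      rw [fromBlocks_inj]
      refine ⟨rfl, by rw [mul_comm], by rw [mul_comm], ?_⟩
      rw [← add_smul, show b * b + s * s = a * c by linarith [hs]]
    have e2 : (fromBlocks (a • 1) (b • 1) (b • 1) (c • 1) :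
        Matrix (n ⊕ n) (n ⊕ n) ℝ) = a⁻¹ • (Lᴴ * L) := by
      rw [key, fromBlocks_smul, fromBlocks_inj]
      refine ⟨?_, ?_, ?_, ?_⟩ <;> rw [smul_smul] <;> congr 1 <;> field_simp
    rw [e2]
    exact psd_smul (posSemidef_conjTranspose_mul_self _) (inv_nonneg.mpr ha)

end Helpers

/-- Let `d ≥ 1`, `0 < m ≤ C₁`, `γ ≥ C₁ + 1`, and let
`S = [[γI, I],[I, I]]`. There exists `λ > 0` depending only on `m, C₁, γ` such that for every
symmetric `H` with `mI ⪯ H ⪯ C₁I`, the matrix `A = [[0, −I],[H, γI]]` satisfies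
`SA + AᵀS = [[2H, H],[H, 2(γ−1)I]] ⪰ [[mI, 0],[0, C₁I]]` and `SA + AᵀS − λS ⪰ 0`. -/
theorem statement3 (d : ℕ) (hd : 1 ≤ d) (m C₁ γ : ℝ) (hm : 0 < m) (hmC : m ≤ C₁)
    (hγ : C₁ + 1 ≤ γ) :
    ∃ lam > (0 : ℝ), ∀ H : Matrix (Fin d) (Fin d) ℝ, H.IsSymm →
      (H - m • (1 : Matrix (Fin d) (Fin d) ℝ)).PosSemidef →
      (C₁ • (1 : Matrix (Fin d) (Fin d) ℝ) - H).PosSemidef →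
      ∀ S A : Matrix (Fin d ⊕ Fin d) (Fin d ⊕ Fin d) ℝ,
        S = Matrix.fromBlocks (γ • 1) 1 1 1 →
        A = Matrix.fromBlocks 0 (-1) H (γ • 1) →
        S * A + Aᵀ * S = Matrix.fromBlocks ((2 : ℝ) • H) H H ((2 * (γ - 1)) • 1) ∧
        (S * A + Aᵀ * S -
          Matrix.fromBlocks (m • 1) 0 0 (C₁ • (1 : Matrix (Fin d) (Fin d) ℝ))).PosSemidef ∧
        (S * A + Aᵀ * S - lam • S).PosSemidef := by
  have hγ0 : (0:ℝ) < γ := by linarith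
  refine ⟨m / (2 * γ), by positivity, ?_⟩
  intro H hHsymm h1 h2 S A hS hA
  set lam : ℝ := m / (2 * γ) with hlam
  have hlam_pos : 0 < lam := by positivity
  have hlamγ : lam * γ = m / 2 := by
    field_simp [hlam]
    rw [hlam]; field_simp
  have hlam_le : lam ≤ m / 2 := by
    rw [hlam, div_le_div_iff₀ (by positivity) (by norm_num)]
    nlinarith
  have hHt : Hᵀ = H := hHsymm
  subst hS hA
  -- the key equation
  have eq1 : Matrix.fromBlocks (γ • 1) 1 1 1 * Matrix.fromBlocks 0 (-1) H (γ • 1)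
      + (Matrix.fromBlocks 0 (-1) H (γ • 1))ᵀ * Matrix.fromBlocks (γ • 1) 1 1 1
      = Matrix.fromBlocks ((2 : ℝ) • H) H H ((2 * (γ - 1)) • 1) := by
    rw [fromBlocks_transpose, fromBlocks_multiply, fromBlocks_multiply, fromBlocks_add]
    simp only [transpose_zero, transpose_neg, transpose_one, transpose_smul, hHt,
      Matrix.smul_mul, Matrix.mul_smul, Matrix.one_mul, Matrix.mul_one,
      Matrix.zero_mul, Matrix.mul_zero, Matrix.mul_neg, Matrix.neg_mul,
      add_zero, zero_add, neg_neg, mul_one]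
    rw [fromBlocks_inj]
    exact ⟨by module, by module, by module, by module⟩
  rw [eq1]
  have hH : H.PosSemidef := by
    have := psd_add h1 (psd_smul (Matrix.PosSemidef.one (n := Fin d) (R := ℝ)) hm.le)
    simpa using this
  have hMD : (Matrix.fromBlocks ((2 : ℝ) • H) H H ((2 * (γ - 1)) • 1)
      - Matrix.fromBlocks (m • 1) 0 0 (C₁ • (1 : Matrix (Fin d) (Fin d) ℝ))).PosSemidef := by
    have eq2 : Matrix.fromBlocks ((2 : ℝ) • H) H H ((2 * (γ - 1)) • 1)
        - Matrix.fromBlocks (m • 1) 0 0 (C₁ • (1 : Matrix (Fin d) (Fin d) ℝ))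
        = Matrix.fromBlocks (H - m • 1) 0 0 0 + Matrix.fromBlocks H H H H
          + Matrix.fromBlocks 0 0 0
            ((C₁ • (1 : Matrix (Fin d) (Fin d) ℝ) - H) + (2 * (γ - 1) - 2 * C₁) • 1) := by
      rw [sub_eq_add_neg, fromBlocks_neg, fromBlocks_add, fromBlocks_add, fromBlocks_add,
        fromBlocks_inj]
      exact ⟨by module, by module, by module, by module⟩
    rw [eq2]
    exact psd_add (psd_add (psd_fromBlocks_diag h1 Matrix.PosSemidef.zero)
      (psd_fromBlocks_same hH))
      (psd_fromBlocks_diag Matrix.PosSemidef.zero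
        (psd_add h2 (psd_smul Matrix.PosSemidef.one (by linarith))))
  refine ⟨rfl, hMD, ?_⟩
  have eq3 : Matrix.fromBlocks ((2 : ℝ) • H) H H ((2 * (γ - 1)) • 1)
      - lam • Matrix.fromBlocks (γ • 1) 1 1 1
      = (Matrix.fromBlocks ((2 : ℝ) • H) H H ((2 * (γ - 1)) • 1)
        - Matrix.fromBlocks (m • 1) 0 0 (C₁ • (1 : Matrix (Fin d) (Fin d) ℝ)))
        + Matrix.fromBlocks ((m / 2) • 1) ((-lam) • 1) ((-lam) • 1) ((C₁ - lam) • 1) := by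
    simp only [sub_eq_add_neg, fromBlocks_smul, fromBlocks_neg, fromBlocks_add]
    rw [fromBlocks_inj]
    refine ⟨?_, by module, by module, by module⟩
    rw [smul_smul, hlamγ]; module
  rw [eq3]
  refine psd_add hMD (psd_fromBlocks_scalar (m / 2) (-lam) (C₁ - lam) (by linarith)
    (by linarith) ?_)
  have h1' : lam ≤ C₁ - lam := by linarith
  nlinarith [hlam_pos.le]
end

section
/- Let d ≥ 1, 0 < m ≤ C₁, and γ ≥ C₁ + 1. Let H : [0,∞) → ℝ^{d×d} be continuous with H(t) symmetric and mI_d ⪯ H(t) ⪯ C₁I_d for every t ≥ 0. Let Q, P : [0,∞) → ℝ^{d×d} be differentiable with Q'(t) = P(t) and P'(t) = −H(t)Q(t) − γP(t) for all t ≥ 0. Then there exist constants C, λ > 0, depending only on m, C₁ and γ, such that ‖Q(t)‖_F + ‖P(t)‖_F ≤ C e^{−λt}(‖Q(0)‖_F + ‖P(0)‖_F) for all t ≥ 0. -/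
open Matrix Finset

-- Equip matrices with the Frobenius norm.
attribute [local instance] Matrix.frobeniusNormedAddCommGroup Matrix.frobeniusNormedSpace

namespace Statement4Aux

variable {d : ℕ}

/-- Frobenius inner product as a plain double sum. -/
def mip (X Y : Matrix (Fin d) (Fin d) ℝ) : ℝ := ∑ i, ∑ j, X i j * Y i j

lemma mip_nonneg (X : Matrix (Fin d) (Fin d) ℝ) : 0 ≤ mip X X := by
  apply Finset.sum_nonneg; intro i _; apply Finset.sum_nonneg; intro j _; exact mul_self_nonneg _

lemma mip_comm (X Y : Matrix (Fin d) (Fin d) ℝ) : mip X Y = mip Y X := by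
  simp [mip, mul_comm]

lemma mip_psd {B : Matrix (Fin d) (Fin d) ℝ} (hB : B.PosSemidef)
    (X : Matrix (Fin d) (Fin d) ℝ) : 0 ≤ mip X (B * X) := by
  have h : mip X (B * X) = ∑ j, (fun i => X i j) ⬝ᵥ B.mulVec (fun i => X i j) := by
    simp only [mip, Matrix.mul_apply, dotProduct, Matrix.mulVec, Finset.mul_sum]
    rw [Finset.sum_comm]
  rw [h]
  refine Finset.sum_nonneg fun j _ => ?_
  simpa using hB.dotProduct_mulVec_nonneg (fun i => X i j)

lemma mip_eq_trace (X Y : Matrix (Fin d) (Fin d) ℝ) : mip X Y = (Xᵀ * Y).trace := by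
  simp only [mip, Matrix.trace, Matrix.diag, Matrix.mul_apply, Matrix.transpose_apply]
  rw [Finset.sum_comm]

lemma mip_symm {A : Matrix (Fin d) (Fin d) ℝ} (hA : A.IsSymm)
    (X Y : Matrix (Fin d) (Fin d) ℝ) : mip X (A * Y) = mip Y (A * X) := by
  rw [mip_eq_trace, mip_eq_trace, ← Matrix.trace_transpose (Xᵀ * (A * Y))]
  simp [Matrix.transpose_mul, hA.eq, Matrix.mul_assoc]

lemma mip_add_right (X Y Z : Matrix (Fin d) (Fin d) ℝ) :
    mip X (Y + Z) = mip X Y + mip X Z := by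
  simp [mip, mul_add, Finset.sum_add_distrib]

lemma mip_add_left (X Y Z : Matrix (Fin d) (Fin d) ℝ) :
    mip (X + Y) Z = mip X Z + mip Y Z := by
  simp [mip, add_mul, Finset.sum_add_distrib]

lemma mip_sub_right (X Y Z : Matrix (Fin d) (Fin d) ℝ) :
    mip X (Y - Z) = mip X Y - mip X Z := by
  simp [mip, mul_sub, Finset.sum_sub_distrib]

lemma mip_neg_right (X Y : Matrix (Fin d) (Fin d) ℝ) :
    mip X (-Y) = -mip X Y := by
  simp [mip, mul_neg, Finset.sum_neg_distrib]

lemma mip_smul_right (c : ℝ) (X Y : Matrix (Fin d) (Fin d) ℝ) :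
    mip X (c • Y) = c * mip X Y := by
  simp only [mip, Matrix.smul_apply, smul_eq_mul, Finset.mul_sum]
  exact Finset.sum_congr rfl fun i _ => Finset.sum_congr rfl fun j _ => by ring

lemma mip_lower {mm : ℝ} {A : Matrix (Fin d) (Fin d) ℝ}
    (hA : (A - mm • (1 : Matrix (Fin d) (Fin d) ℝ)).PosSemidef)
    (X : Matrix (Fin d) (Fin d) ℝ) : mm * mip X X ≤ mip X (A * X) := by
  have h := mip_psd hA X
  rw [Matrix.sub_mul, mip_sub_right, Matrix.smul_mul, Matrix.one_mul, mip_smul_right] at h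
  linarith

lemma mip_upper {c : ℝ} {A : Matrix (Fin d) (Fin d) ℝ}
    (hA : (c • (1 : Matrix (Fin d) (Fin d) ℝ) - A).PosSemidef)
    (X : Matrix (Fin d) (Fin d) ℝ) : mip X (A * X) ≤ c * mip X X := by
  have h := mip_psd hA X
  rw [Matrix.sub_mul, mip_sub_right, Matrix.smul_mul, Matrix.one_mul, mip_smul_right] at h
  linarith

/-- cross term estimate: `-2⟨Y, AX⟩ ≤ ⟨X, AX⟩ + ⟨Y, AY⟩` for `A ⪰ mm·I ⪰ 0`, symmetric. -/
lemma mip_cross {mm : ℝ} (hmm : 0 ≤ mm) {A : Matrix (Fin d) (Fin d) ℝ}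
    (hsym : A.IsSymm) (hA : (A - mm • (1 : Matrix (Fin d) (Fin d) ℝ)).PosSemidef)
    (X Y : Matrix (Fin d) (Fin d) ℝ) :
    -2 * mip Y (A * X) ≤ mip X (A * X) + mip Y (A * Y) := by
  have h0 : 0 ≤ mip (X + Y) (A * (X + Y)) :=
    le_trans (mul_nonneg hmm (mip_nonneg _)) (mip_lower hA (X + Y))
  rw [Matrix.mul_add, mip_add_left, mip_add_right, mip_add_right,
    mip_symm hsym X Y] at h0
  linarith

lemma quad_nonneg {c1 c2 a b : ℝ} (h1 : 0 < c1) (h2 : 1 ≤ c1 * c2) :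
    0 ≤ c1 * a ^ 2 + 2 * a * b + c2 * b ^ 2 := by
  nlinarith [sq_nonneg (c1 * a + b), sq_nonneg b]

lemma mip_quad_nonneg {c1 c2 : ℝ} (h1 : 0 < c1) (h2 : 1 ≤ c1 * c2)
    (X Y : Matrix (Fin d) (Fin d) ℝ) :
    0 ≤ c1 * mip X X + 2 * mip X Y + c2 * mip Y Y := by
  have h : c1 * mip X X + 2 * mip X Y + c2 * mip Y Y
      = ∑ i, ∑ j, (c1 * (X i j) ^ 2 + 2 * (X i j) * (Y i j) + c2 * (Y i j) ^ 2) := by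
    simp only [mip, Finset.mul_sum, ← Finset.sum_add_distrib]
    exact Finset.sum_congr rfl fun i _ => Finset.sum_congr rfl fun j _ => by ring
  rw [h]
  exact Finset.sum_nonneg fun i _ => Finset.sum_nonneg fun j _ => quad_nonneg h1 h2

lemma two_mip_le (X Y : Matrix (Fin d) (Fin d) ℝ) :
    2 * mip X Y ≤ mip X X + mip Y Y := by
  have := mip_quad_nonneg (c1 := 1) (c2 := 1) one_pos (by norm_num) X (-Y)
  rw [mip_neg_right] at this
  have h2 : mip (-Y) (-Y) = mip Y Y := by simp [mip, neg_mul_neg]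
  rw [h2] at this; linarith

lemma entry_hasDeriv {f : ℝ → Matrix (Fin d) (Fin d) ℝ} {f' : Matrix (Fin d) (Fin d) ℝ}
    {s : Set ℝ} {t : ℝ} (h : HasDerivWithinAt f f' s t) (i j : Fin d) :
    HasDerivWithinAt (fun τ => f τ i j) (f' i j) s t := by
  have := ((LinearMap.toContinuousLinearMap
    (Matrix.entryLinearMap ℝ ℝ i j)).hasFDerivAt.comp_hasDerivWithinAt t h)
  exact this

lemma mip_hasDeriv {f g : ℝ → Matrix (Fin d) (Fin d) ℝ}
    {f' g' : Matrix (Fin d) (Fin d) ℝ} {s : Set ℝ} {t : ℝ}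
    (hf : HasDerivWithinAt f f' s t) (hg : HasDerivWithinAt g g' s t) :
    HasDerivWithinAt (fun τ => mip (f τ) (g τ)) (mip f' (g t) + mip (f t) g') s t := by
  have h : HasDerivWithinAt (fun τ => ∑ i, ∑ j, f τ i j * g τ i j)
      (∑ i, ∑ j, (f' i j * g t i j + f t i j * g' i j)) s t := by
    apply HasDerivWithinAt.fun_sum
    intro i _
    apply HasDerivWithinAt.fun_sum
    intro j _
    exact (entry_hasDeriv hf i j).mul (entry_hasDeriv hg i j)
  have he : (∑ i, ∑ j, (f' i j * g t i j + f t i j * g' i j))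
      = mip f' (g t) + mip (f t) g' := by
    simp [mip, Finset.sum_add_distrib]
  rw [he] at h
  exact h

lemma frob_norm_eq (A : Matrix (Fin d) (Fin d) ℝ) : ‖A‖ = Real.sqrt (mip A A) := by
  rw [Matrix.frobenius_norm_def, Real.sqrt_eq_rpow]
  congr 1
  simp only [mip]
  refine Finset.sum_congr rfl fun i _ => Finset.sum_congr rfl fun j _ => ?_
  rw [Real.rpow_two, Real.norm_eq_abs, sq_abs, sq]

end Statement4Aux

open Statement4Aux

set_option maxHeartbeats 1000000 in
/-- exponential decay of the tangent process `Q' = P`,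
`P' = −H(t)Q − γP` when `mI ⪯ H(t) ⪯ C₁I` and `γ ≥ C₁ + 1`; the constants `C, λ > 0`
depend only on `m, C₁, γ`.  Here `‖·‖` is the Frobenius norm. -/
theorem statement4 (d : ℕ) (hd : 1 ≤ d) (m C₁ γ : ℝ) (hm : 0 < m) (hmC : m ≤ C₁)
    (hγ : C₁ + 1 ≤ γ) :
    ∃ C > (0 : ℝ), ∃ lam > (0 : ℝ), ∀ H Q P : ℝ → Matrix (Fin d) (Fin d) ℝ,
      ContinuousOn H (Set.Ici 0) →
      (∀ t ≥ (0 : ℝ), (H t).IsSymm) →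
      (∀ t ≥ (0 : ℝ), (H t - m • (1 : Matrix (Fin d) (Fin d) ℝ)).PosSemidef) →
      (∀ t ≥ (0 : ℝ), (C₁ • (1 : Matrix (Fin d) (Fin d) ℝ) - H t).PosSemidef) →
      (∀ t ≥ (0 : ℝ), HasDerivWithinAt Q (P t) (Set.Ici 0) t) →
      (∀ t ≥ (0 : ℝ), HasDerivWithinAt P (-(H t * Q t) - γ • P t) (Set.Ici 0) t) →
      ∀ t ≥ (0 : ℝ), ‖Q t‖ + ‖P t‖ ≤ C * Real.exp (-lam * t) * (‖Q 0‖ + ‖P 0‖) := by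
  have hγ1 : (1 : ℝ) < γ := by linarith
  set δ : ℝ := (γ - 1) / (γ + 1) with hδdef
  set lam2 : ℝ := m / (γ + 1) with hlam2def
  have hγp : (0 : ℝ) < γ + 1 := by linarith
  have hδpos : 0 < δ := div_pos (by linarith) hγp
  have hlam2pos : 0 < lam2 := div_pos hm hγp
  refine ⟨Real.sqrt (2 * (γ + 1) / δ), Real.sqrt_pos.2 (by positivity), lam2 / 2,
    by positivity, ?_⟩
  intro H Q P _ hsym hlow hupp hQ hP
  -- Lyapunov function
  set V : ℝ → ℝ := fun τ =>
    γ * mip (Q τ) (Q τ) + 2 * mip (Q τ) (P τ) + mip (P τ) (P τ) with hVdef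
  -- derivative of V
  set D : ℝ → ℝ := fun τ =>
    γ * (mip (P τ) (Q τ) + mip (Q τ) (P τ)) +
      2 * (mip (P τ) (P τ) + mip (Q τ) (-(H τ * Q τ) - γ • P τ)) +
      (mip (-(H τ * Q τ) - γ • P τ) (P τ) + mip (P τ) (-(H τ * Q τ) - γ • P τ)) with hDdef
  have hV : ∀ τ ≥ (0 : ℝ), HasDerivWithinAt V (D τ) (Set.Ici 0) τ := by
    intro τ hτ
    exact (((mip_hasDeriv (hQ τ hτ) (hQ τ hτ)).const_mul γ).add
      ((mip_hasDeriv (hQ τ hτ) (hP τ hτ)).const_mul 2)).add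
      (mip_hasDeriv (hP τ hτ) (hP τ hτ))
  -- key differential inequality
  have hDle : ∀ τ ≥ (0 : ℝ), D τ ≤ -lam2 * V τ := by
    intro τ hτ
    set qq := mip (Q τ) (Q τ)
    set pp := mip (P τ) (P τ)
    set s := mip (Q τ) (P τ)
    set A := mip (Q τ) (H τ * Q τ)
    set B := mip (P τ) (H τ * Q τ)
    set Cc := mip (P τ) (H τ * P τ)
    have hexp1 : mip (Q τ) (-(H τ * Q τ) - γ • P τ) = -A - γ * s := by
      rw [mip_sub_right, mip_neg_right, mip_smul_right]
    have hexp2 : mip (P τ) (-(H τ * Q τ) - γ • P τ) = -B - γ * pp := by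
      rw [mip_sub_right, mip_neg_right, mip_smul_right]
    have hexp3 : mip (-(H τ * Q τ) - γ • P τ) (P τ) = -B - γ * pp := by
      rw [mip_comm]; exact hexp2
    have hsc : mip (P τ) (Q τ) = s := mip_comm _ _
    have hA : m * qq ≤ A := mip_lower (hlow τ hτ) _
    have hC : Cc ≤ C₁ * pp := mip_upper (hupp τ hτ) _
    have hcross : -2 * B ≤ A + Cc := mip_cross hm.le (hsym τ hτ) (hlow τ hτ) _ _
    have hqqnn : 0 ≤ qq := mip_nonneg _
    have hppnn : 0 ≤ pp := mip_nonneg _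
    have hsle : 2 * s ≤ qq + pp := two_mip_le _ _
    have hVle : V τ ≤ (γ + 1) * (qq + pp) := by
      simp only [hVdef]; nlinarith
    have hDval : D τ = 2 * pp - 2 * A - 2 * B - 2 * γ * pp := by
      simp only [hDdef, hexp1, hexp2, hexp3, hsc]; ring
    have hmain : D τ ≤ -m * (qq + pp) := by
      rw [hDval]; nlinarith
    have : -m * (qq + pp) ≤ -lam2 * V τ := by
      have h1 : lam2 * V τ ≤ lam2 * ((γ + 1) * (qq + pp)) :=
        mul_le_mul_of_nonneg_left hVle hlam2pos.le
      have h2 : lam2 * (γ + 1) = m := by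
        rw [hlam2def]; field_simp
      nlinarith
    linarith
  -- Gronwall: V t ≤ V 0 * exp (-lam2 * t)
  have hVcont : ContinuousOn V (Set.Ici 0) := fun τ hτ => (hV τ hτ).continuousWithinAt
  set g : ℝ → ℝ := fun τ => V τ * Real.exp (lam2 * τ) with hgdef
  have hg' : ∀ x ∈ Set.Ioi (0 : ℝ),
      HasDerivAt g (D x * Real.exp (lam2 * x) + V x * (Real.exp (lam2 * x) * lam2)) x := by
    intro x hx
    have hVx : HasDerivAt V (D x) x :=
      (hV x (le_of_lt hx)).hasDerivAt (Ici_mem_nhds hx)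
    have hex : HasDerivAt (fun τ => Real.exp (lam2 * τ)) (Real.exp (lam2 * x) * lam2) x := by
      simpa [mul_comm] using (((hasDerivAt_id x).const_mul lam2).exp)
    exact hVx.mul hex
  have hanti : AntitoneOn g (Set.Ici 0) := by
    apply antitoneOn_of_deriv_nonpos (convex_Ici 0)
    · exact hVcont.mul (Real.continuous_exp.comp (continuous_const.mul continuous_id)).continuousOn
    · intro x hx
      rw [interior_Ici] at hx
      exact (hg' x hx).differentiableAt.differentiableWithinAt
    · intro x hx
      rw [interior_Ici] at hx
      rw [(hg' x hx).deriv]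
      have h1 : D x ≤ -lam2 * V x := hDle x (le_of_lt hx)
      have h2 : (0 : ℝ) < Real.exp (lam2 * x) := Real.exp_pos _
      nlinarith
  have hVdecay : ∀ t ≥ (0 : ℝ), V t ≤ V 0 * Real.exp (-lam2 * t) := by
    intro t ht
    have := hanti (Set.self_mem_Ici) ht ht
    simp only [hgdef, mul_zero, Real.exp_zero, mul_one] at this
    have hepos : (0 : ℝ) < Real.exp (lam2 * t) := Real.exp_pos _
    rw [neg_mul, Real.exp_neg, ← div_eq_mul_inv]
    exact (le_div_iff₀ hepos).2 this
  -- final assembly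
  intro t ht
  have hqqt : 0 ≤ mip (Q t) (Q t) := mip_nonneg _
  have hppt : 0 ≤ mip (P t) (P t) := mip_nonneg _
  have hqq0 : 0 ≤ mip (Q 0) (Q 0) := mip_nonneg _
  have hpp0 : 0 ≤ mip (P 0) (P 0) := mip_nonneg _
  -- lower bound for V
  have hVlow : ∀ τ, δ * (mip (Q τ) (Q τ) + mip (P τ) (P τ)) ≤ V τ := by
    intro τ
    have hc1 : 0 < γ - δ := by
      rw [hδdef]
      rw [sub_pos, div_lt_iff₀ hγp]
      nlinarith
    have hc2 : 1 ≤ (γ - δ) * (1 - δ) := by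
      rw [hδdef]
      have h1 : (γ - (γ - 1) / (γ + 1)) * (1 - (γ - 1) / (γ + 1)) * (γ + 1) ^ 2
          = (γ ^ 2 + 1) * 2 := by
        field_simp
        ring
      nlinarith [h1, sq_nonneg (γ - 1), sq_nonneg (γ + 1), hγp]
    have h2 := mip_quad_nonneg hc1 hc2 (Q τ) (P τ)
    simp only [hVdef]
    linarith
  have hVup0 : V 0 ≤ (γ + 1) * (mip (Q 0) (Q 0) + mip (P 0) (P 0)) := by
    have hs := two_mip_le (Q 0) (P 0)
    simp only [hVdef]
    nlinarith
  have hdecay := hVdecay t ht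
  -- norms
  have hnQ : ‖Q t‖ = Real.sqrt (mip (Q t) (Q t)) := frob_norm_eq _
  have hnP : ‖P t‖ = Real.sqrt (mip (P t) (P t)) := frob_norm_eq _
  have hnQ0 : ‖Q 0‖ = Real.sqrt (mip (Q 0) (Q 0)) := frob_norm_eq _
  have hnP0 : ‖P 0‖ = Real.sqrt (mip (P 0) (P 0)) := frob_norm_eq _
  set K : ℝ := Real.sqrt (2 * (γ + 1) / δ) * Real.exp (-(lam2 / 2) * t) * (‖Q 0‖ + ‖P 0‖)
    with hKdef
  have hnorm0 : 0 ≤ ‖Q 0‖ + ‖P 0‖ := by positivity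
  have hKnn : 0 ≤ K := by positivity
  have hLnn : 0 ≤ ‖Q t‖ + ‖P t‖ := by positivity
  -- squares
  have hsq1 : (‖Q t‖ + ‖P t‖) ^ 2 ≤ 2 * (mip (Q t) (Q t) + mip (P t) (P t)) := by
    rw [hnQ, hnP]
    have h1 := Real.sq_sqrt hqqt
    have h2 := Real.sq_sqrt hppt
    have h3 := Real.sqrt_nonneg (mip (Q t) (Q t))
    have h4 := Real.sqrt_nonneg (mip (P t) (P t))
    nlinarith [sq_nonneg (Real.sqrt (mip (Q t) (Q t)) - Real.sqrt (mip (P t) (P t)))]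
  have hsq0 : mip (Q 0) (Q 0) + mip (P 0) (P 0) ≤ (‖Q 0‖ + ‖P 0‖) ^ 2 := by
    rw [hnQ0, hnP0]
    have h1 := Real.sq_sqrt hqq0
    have h2 := Real.sq_sqrt hpp0
    have h3 := Real.sqrt_nonneg (mip (Q 0) (Q 0))
    have h4 := Real.sqrt_nonneg (mip (P 0) (P 0))
    nlinarith [mul_nonneg h3 h4]
  have hKsq : K ^ 2 = (2 * (γ + 1) / δ) * Real.exp (-lam2 * t) * (‖Q 0‖ + ‖P 0‖) ^ 2 := by
    rw [hKdef]
    rw [mul_pow, mul_pow, Real.sq_sqrt (by positivity)]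
    congr 1
    congr 1
    rw [← Real.exp_nat_mul]
    congr 1
    ring
  have hmainsq : (‖Q t‖ + ‖P t‖) ^ 2 ≤ K ^ 2 := by
    rw [hKsq]
    have hVt := hVlow t
    have hVtd : V t ≤ V 0 * Real.exp (-lam2 * t) := hdecay
    have hexpnn : (0 : ℝ) < Real.exp (-lam2 * t) := Real.exp_pos _
    have hchain : δ * (mip (Q t) (Q t) + mip (P t) (P t)) ≤
        (γ + 1) * (mip (Q 0) (Q 0) + mip (P 0) (P 0)) * Real.exp (-lam2 * t) := by
      calc δ * (mip (Q t) (Q t) + mip (P t) (P t)) ≤ V t := hVt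
        _ ≤ V 0 * Real.exp (-lam2 * t) := hVtd
        _ ≤ (γ + 1) * (mip (Q 0) (Q 0) + mip (P 0) (P 0)) * Real.exp (-lam2 * t) := by
            exact mul_le_mul_of_nonneg_right hVup0 hexpnn.le
    have h0 : mip (Q 0) (Q 0) + mip (P 0) (P 0) ≤ (‖Q 0‖ + ‖P 0‖) ^ 2 := hsq0
    rw [div_mul_eq_mul_div, div_mul_eq_mul_div, le_div_iff₀ hδpos]
    nlinarith [mul_nonneg (mul_nonneg (by linarith : (0:ℝ) ≤ γ + 1) hexpnn.le)
      (sub_nonneg.2 h0)]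
  calc ‖Q t‖ + ‖P t‖ = Real.sqrt ((‖Q t‖ + ‖P t‖) ^ 2) := (Real.sqrt_sq hLnn).symm
    _ ≤ Real.sqrt (K ^ 2) := Real.sqrt_le_sqrt hmainsq
    _ = K := Real.sqrt_sq hKnn
    _ = Real.sqrt (2 * (γ + 1) / δ) * Real.exp (-(lam2 / 2) * t) * (‖Q 0‖ + ‖P 0‖) := rfl
end

section
/- Let d ≥ 1, 0 < m ≤ C₁, γ ≥ C₁ + 1 and δ ≥ 0. Let H, H̃ : [0,∞) → ℝ^{d×d} be continuous with H(t), H̃(t) symmetric, mI_d ⪯ H(t) ⪯ C₁I_d and mI_d ⪯ H̃(t) ⪯ C₁I_d, and ‖H(t) − H̃(t)‖_F ≤ δ for all t ≥ 0. Let (Q,P) and (Q̃,P̃) be differentiable matrix-valued solutions of Q' = P, P' = −H(t)Q − γP and Q̃' = P̃, P̃' = −H̃(t)Q̃ − γP̃ with the same initial values Q(0) = Q̃(0), P(0) = P̃(0). Then there exist constants C, λ > 0, depending only on m, C₁ and γ, such that ‖Q(t) − Q̃(t)‖_F + ‖P(t) − P̃(t)‖_F ≤ C e^{−λt}(‖Q(0)‖_F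 + ‖P(0)‖_F)·δ for all t ≥ 0. -/
open Matrix

-- Equip matrices with the Frobenius norm.
attribute [local instance] Matrix.frobeniusNormedAddCommGroup Matrix.frobeniusNormedSpace

private lemma frob_norm_mul_le {d : ℕ} (A B : Matrix (Fin d) (Fin d) ℝ) :
    ‖A * B‖ ≤ ‖A‖ * ‖B‖ := by
  letI : NormedRing (Matrix (Fin d) (Fin d) ℝ) := Matrix.frobeniusNormedRing
  exact norm_mul_le A B

open Filter Set

section AuxMatrix

variable {d : ℕ}

lemma psd_nonneg' {A : Matrix (Fin d) (Fin d) ℝ} (hA : A.PosSemidef) (x : Fin d → ℝ) :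
    0 ≤ x ⬝ᵥ A.mulVec x := by
  have := hA.dotProduct_mulVec_nonneg x
  simpa using this

lemma psd_symm_dot' {A : Matrix (Fin d) (Fin d) ℝ} (hA : A.IsHermitian) (x y : Fin d → ℝ) :
    x ⬝ᵥ A.mulVec y = y ⬝ᵥ A.mulVec x := by
  rw [Matrix.dotProduct_mulVec, ← Matrix.mulVec_transpose]
  have hT : Aᵀ = A := by simpa [Matrix.IsHermitian] using hA
  rw [hT, dotProduct_comm]

-- Cauchy-Schwarz for PSD bilinear form
lemma psd_cs' {A : Matrix (Fin d) (Fin d) ℝ} (hA : A.PosSemidef) (x y : Fin d → ℝ) :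
    (x ⬝ᵥ A.mulVec y)^2 ≤ (x ⬝ᵥ A.mulVec x) * (y ⬝ᵥ A.mulVec y) := by
  have key : ∀ t : ℝ, 0 ≤ (y ⬝ᵥ A.mulVec y) * (t*t) + (2 * (x ⬝ᵥ A.mulVec y)) * t + (x ⬝ᵥ A.mulVec x) := by
    intro t
    have h0 := psd_nonneg' hA (x + t • y)
    have hsym := psd_symm_dot' hA.1 x y
    have hexp : (x + t • y) ⬝ᵥ A.mulVec (x + t • y)
        = (y ⬝ᵥ A.mulVec y) * (t*t) + (2 * (x ⬝ᵥ A.mulVec y)) * t + (x ⬝ᵥ A.mulVec x) := by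
      simp only [Matrix.mulVec_add, Matrix.mulVec_smul, add_dotProduct,
        smul_dotProduct, dotProduct_add, dotProduct_smul, smul_eq_mul]
      linear_combination (-t : ℝ) * hsym
    rw [hexp] at h0; exact h0
  have hd := discrim_le_zero key
  unfold discrim at hd
  nlinarith [hd]

lemma psd_dot_le' {A : Matrix (Fin d) (Fin d) ℝ} {c : ℝ}
    (hA2 : (c • (1 : Matrix (Fin d) (Fin d) ℝ) - A).PosSemidef) (x : Fin d → ℝ) :
    x ⬝ᵥ A.mulVec x ≤ c * (x ⬝ᵥ x) := by
  have h := psd_nonneg' hA2 x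
  rw [Matrix.sub_mulVec, dotProduct_sub, Matrix.smul_mulVec, Matrix.one_mulVec,
    dotProduct_smul] at h
  simpa [smul_eq_mul] using h

lemma mulVec_dot_le' {A : Matrix (Fin d) (Fin d) ℝ} {c : ℝ} (hc : 0 ≤ c)
    (hA : A.PosSemidef) (hA2 : (c • (1 : Matrix (Fin d) (Fin d) ℝ) - A).PosSemidef)
    (x : Fin d → ℝ) :
    (A.mulVec x) ⬝ᵥ (A.mulVec x) ≤ c^2 * (x ⬝ᵥ x) := by
  set y := A.mulVec x with hy
  have hT : Aᵀ = A := by simpa [Matrix.IsHermitian] using hA.1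
  have hxy : x ⬝ᵥ A.mulVec y = y ⬝ᵥ y := by
    rw [Matrix.dotProduct_mulVec, ← Matrix.mulVec_transpose, hT, ← hy]
  have cs := psd_cs' hA x y
  rw [hxy] at cs
  have h1 : x ⬝ᵥ A.mulVec x ≤ c * (x ⬝ᵥ x) := psd_dot_le' hA2 x
  have h2 : y ⬝ᵥ A.mulVec y ≤ c * (y ⬝ᵥ y) := psd_dot_le' hA2 y
  have h3 : 0 ≤ x ⬝ᵥ A.mulVec x := psd_nonneg' hA x
  have h4 : 0 ≤ y ⬝ᵥ A.mulVec y := psd_nonneg' hA y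
  have h5 : 0 ≤ y ⬝ᵥ y := Finset.sum_nonneg fun i _ => mul_self_nonneg (y i)
  have h6 : 0 ≤ x ⬝ᵥ x := Finset.sum_nonneg fun i _ => mul_self_nonneg (x i)
  have h7 : (x ⬝ᵥ A.mulVec x) * (y ⬝ᵥ A.mulVec y) ≤ (c * (x ⬝ᵥ x)) * (c * (y ⬝ᵥ y)) :=
    mul_le_mul h1 h2 h4 (by positivity)
  have h8 : (y ⬝ᵥ y)^2 ≤ (c^2 * (x ⬝ᵥ x)) * (y ⬝ᵥ y) := by nlinarith
  rcases eq_or_lt_of_le h5 with h9 | h9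
  · rw [← h9]; positivity
  · exact le_of_mul_le_mul_right (by nlinarith) h9

lemma frob_sq' (M : Matrix (Fin d) (Fin d) ℝ) : ‖M‖ ^ 2 = ∑ i, ∑ j, (M i j)^2 := by
  rw [Matrix.frobenius_norm_def, ← Real.rpow_natCast _ 2, ← Real.rpow_mul (by positivity)]
  norm_num

lemma frob_mul_le_of_psd' {A : Matrix (Fin d) (Fin d) ℝ} {c : ℝ} (hc : 0 ≤ c)
    (hA : A.PosSemidef) (hA2 : (c • (1 : Matrix (Fin d) (Fin d) ℝ) - A).PosSemidef)
    (B : Matrix (Fin d) (Fin d) ℝ) : ‖A * B‖ ≤ c * ‖B‖ := by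
  have key : ‖A * B‖^2 ≤ (c * ‖B‖)^2 := by
    rw [frob_sq', mul_pow, frob_sq']
    rw [Finset.sum_comm]
    have hcol : ∀ j, (∑ i, ((A * B) i j)^2) ≤ c^2 * ∑ i, (B i j)^2 := by
      intro j
      have h := mulVec_dot_le' hc hA hA2 (fun k => B k j)
      have e1 : (A.mulVec fun k => B k j) ⬝ᵥ (A.mulVec fun k => B k j)
          = ∑ i, ((A * B) i j)^2 := by
        simp [dotProduct, Matrix.mulVec, Matrix.mul_apply, sq]
      have e2 : (fun k => B k j) ⬝ᵥ (fun k => B k j) = ∑ i, (B i j)^2 := by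
        simp [dotProduct, sq]
      rw [e1, e2] at h
      exact h
    calc (∑ j, ∑ i, ((A * B) i j)^2) ≤ ∑ j, c^2 * ∑ i, (B i j)^2 :=
          Finset.sum_le_sum fun j _ => hcol j
      _ = c^2 * ∑ j, ∑ i, (B i j)^2 := by rw [Finset.mul_sum]
      _ = c^2 * ∑ i, ∑ j, (B i j)^2 := by rw [Finset.sum_comm]
  exact (pow_le_pow_iff_left₀ (norm_nonneg _) (by positivity) two_ne_zero).mp key

lemma psd_smul_one' {r : ℝ} (hr : 0 ≤ r) :
    (r • (1 : Matrix (Fin d) (Fin d) ℝ)).PosSemidef := by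
  refine Matrix.PosSemidef.of_dotProduct_mulVec_nonneg ?_ ?_
  · have h1 : (1 : Matrix (Fin d) (Fin d) ℝ).IsHermitian := Matrix.isHermitian_one
    simpa [Matrix.IsHermitian] using congrArg (r • ·) h1
  · intro x
    rw [Matrix.smul_mulVec, Matrix.one_mulVec]
    have : 0 ≤ r * (star x ⬝ᵥ x) := by
      apply mul_nonneg hr
      simpa [dotProduct] using Finset.sum_nonneg fun i _ => mul_self_nonneg (x i)
    simpa [smul_eq_mul, dotProduct_smul] using this

end AuxMatrix

section AuxAnalysis

lemma slope_norm_le {E : Type*} [NormedAddCommGroup E] [NormedSpace ℝ E]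
    {f : ℝ → E} {t cc : ℝ} {w : E}
    (hf : HasDerivWithinAt f (cc • f t + w) (Set.Ici t) t) {ε : ℝ} (hε : 0 < ε) :
    ∀ᶠ z in nhdsWithin t (Set.Ioi t), ‖f z‖ - ‖f t‖ ≤ (z - t) * (cc * ‖f t‖ + ‖w‖ + ε) := by
  have hslope : Tendsto (slope f t) (nhdsWithin t (Set.Ioi t)) (nhds (cc • f t + w)) := by
    have := hasDerivWithinAt_iff_tendsto_slope.mp hf
    rwa [Set.Ici_sdiff_left] at this
  have h1 : ∀ᶠ z in nhdsWithin t (Set.Ioi t), ‖slope f t z - (cc • f t + w)‖ < ε := by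
    have := hslope (Metric.ball_mem_nhds (cc • f t + w) hε)
    rw [Filter.mem_map] at this
    apply Filter.eventually_of_mem this
    intro z hz
    simpa [Metric.mem_ball, dist_eq_norm] using hz
  have h2 : ∀ᶠ z in nhdsWithin t (Set.Ioi t), z - t < (1 + |cc|)⁻¹ := by
    have : ∀ᶠ z in nhdsWithin t (Set.Ioi t), z ∈ Set.Ioo t (t + (1 + |cc|)⁻¹) := by
      apply Ioo_mem_nhdsGT_of_mem
      constructor
      · exact le_refl t
      · linarith [inv_pos.mpr (show (0:ℝ) < 1 + |cc| by positivity)]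
    exact this.mono (fun z hz => by linarith [hz.2])
  have h3 : ∀ᶠ z in nhdsWithin t (Set.Ioi t), t < z := eventually_mem_nhdsWithin
  filter_upwards [h1, h2, h3] with z hz1 hz2 hz3
  have hzt : 0 < z - t := by linarith
  have hfz : f z = f t + (z - t) • slope f t z := by
    rw [slope_def_module, smul_smul, mul_inv_cancel₀ (ne_of_gt hzt), one_smul]
    abel
  have hbound : ‖f z‖ ≤ ‖f t + (z - t) • (cc • f t + w)‖ + (z - t) * ε := by
    calc ‖f z‖ = ‖(f t + (z - t) • (cc • f t + w)) + (z - t) • (slope f t z - (cc • f t + w))‖ := by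
          rw [hfz]; congr 1; rw [smul_sub]; abel
      _ ≤ ‖f t + (z - t) • (cc • f t + w)‖ + ‖(z - t) • (slope f t z - (cc • f t + w))‖ := norm_add_le _ _
      _ ≤ ‖f t + (z - t) • (cc • f t + w)‖ + (z - t) * ε := by
          gcongr
          rw [norm_smul, Real.norm_eq_abs, abs_of_pos hzt]
          exact mul_le_mul_of_nonneg_left hz1.le hzt.le
  have hcoef : (0:ℝ) ≤ 1 + (z - t) * cc := by
    have habs : (z - t) * |cc| < 1 := by
      have h4 : (z-t) * |cc| ≤ (1+|cc|)⁻¹ * |cc| := mul_le_mul_of_nonneg_right hz2.le (abs_nonneg cc)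
      have h5 : (1+|cc|)⁻¹ * |cc| < 1 := by
        rw [inv_mul_lt_iff₀ (by positivity)]
        nlinarith [abs_nonneg cc]
      linarith
    nlinarith [neg_abs_le cc, hzt]
  have hnorm2 : ‖f t + (z - t) • (cc • f t + w)‖ ≤ (1 + (z-t)*cc) * ‖f t‖ + (z-t) * ‖w‖ := by
    calc ‖f t + (z - t) • (cc • f t + w)‖ = ‖(1 + (z-t)*cc) • f t + (z-t) • w‖ := by
          congr 1; rw [smul_add, smul_smul, add_smul, one_smul]; abel
      _ ≤ ‖(1 + (z-t)*cc) • f t‖ + ‖(z-t) • w‖ := norm_add_le _ _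
      _ = (1 + (z-t)*cc) * ‖f t‖ + (z-t) * ‖w‖ := by
          rw [norm_smul, norm_smul, Real.norm_eq_abs, Real.norm_eq_abs,
            abs_of_nonneg hcoef, abs_of_pos hzt]
  nlinarith [hbound, hnorm2]

end AuxAnalysis
set_option maxHeartbeats 1000000 in
lemma gronwall_core {E : Type*} [NormedAddCommGroup E] [NormedSpace ℝ E]
    {x y S : ℝ → E} {m γ c : ℝ}
    (hm : 0 < m) (hγ : m + 1 ≤ γ) (hc : 0 ≤ c)
    (hx : ∀ t ≥ (0:ℝ), HasDerivWithinAt x ((-1:ℝ) • x t + y t) (Set.Ici 0) t)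
    (hy : ∀ t ≥ (0:ℝ), HasDerivWithinAt y ((1-γ) • y t + S t) (Set.Ici 0) t)
    (hS : ∀ t ≥ (0:ℝ), ‖S t‖ ≤ (γ-1-m) * ‖x t‖ + c * Real.exp ((-(m/(2*γ))) * t)) :
    ∀ t ≥ (0:ℝ), (γ-1-m/2) * ‖x t‖ + ‖y t‖ ≤
      ((γ-1-m/2) * ‖x 0‖ + ‖y 0‖ + c / (min (m/(2*(γ-1-m/2))) (m/2) - m/(2*γ)))
        * Real.exp ((-(m/(2*γ))) * t) := by
  obtain ⟨a, ha_def⟩ : ∃ a : ℝ, a = γ - 1 - m/2 := ⟨_, rfl⟩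
  obtain ⟨lam, hlam_def⟩ : ∃ l : ℝ, l = m/(2*γ) := ⟨_, rfl⟩
  obtain ⟨lam2, hlam2_def⟩ : ∃ l : ℝ, l = min (m/(2*a)) (m/2) := ⟨_, rfl⟩
  have ha : 0 < a := by rw [ha_def]; linarith
  have hγ1 : (1:ℝ) < γ := by linarith
  have hγ0 : (0:ℝ) < γ := by linarith
  have hlam : 0 < lam := by rw [hlam_def]; positivity
  have hlam2 : 0 < lam2 := by
    rw [hlam2_def]; apply lt_min
    · positivity
    · positivity
  have hΔ : lam < lam2 := by
    rw [hlam2_def, hlam_def, lt_min_iff]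
    constructor
    · apply div_lt_div_of_pos_left hm (by positivity)
      linarith
    · rw [div_lt_div_iff₀ (by positivity) (by norm_num : (0:ℝ) < 2)]
      nlinarith
  obtain ⟨Δ, hΔ_def⟩ : ∃ D : ℝ, D = lam2 - lam := ⟨_, rfl⟩
  have hΔpos : 0 < Δ := by rw [hΔ_def]; linarith
  have hl2a : lam2 * a ≤ m/2 := by
    have h1 : lam2 ≤ m/(2*a) := hlam2_def ▸ min_le_left _ _
    calc lam2 * a ≤ m/(2*a) * a := mul_le_mul_of_nonneg_right h1 ha.le
      _ = m/2 := by field_simp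
  have hl2 : lam2 ≤ m/2 := hlam2_def ▸ min_le_right _ _
  obtain ⟨g, hg_def⟩ : ∃ g : ℝ → ℝ, g = fun t => a * ‖x t‖ + ‖y t‖ := ⟨_, rfl⟩
  have hg_eval : ∀ t, g t = a * ‖x t‖ + ‖y t‖ := fun t => by rw [hg_def]
  obtain ⟨g0, hg0_def⟩ : ∃ r : ℝ, r = a * ‖x 0‖ + ‖y 0‖ := ⟨_, rfl⟩
  have hg0 : 0 ≤ g0 := by rw [hg0_def]; positivity
  have hS' : ∀ t ≥ (0:ℝ), ‖S t‖ ≤ (γ-1-m) * ‖x t‖ + c * Real.exp ((-lam) * t) := by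
    intro t ht; rw [hlam_def]; exact hS t ht
  intro T hT
  obtain ⟨B₀, hB₀_def⟩ : ∃ B : ℝ → ℝ, B = fun t => g0 * Real.exp ((-lam2)*t)
      + (c/Δ) * (Real.exp ((-lam)*t) - Real.exp ((-lam2)*t)) := ⟨_, rfl⟩
  have hB₀_eval : ∀ t, B₀ t = g0 * Real.exp ((-lam2)*t)
      + (c/Δ) * (Real.exp ((-lam)*t) - Real.exp ((-lam2)*t)) := fun t => by rw [hB₀_def]
  have hexp : ∀ (k t : ℝ), HasDerivAt (fun s => Real.exp (k*s)) (k * Real.exp (k*t)) t := by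
    intro k t
    have h := (hasDerivAt_id t).const_mul k
    simpa [mul_comm, Function.comp_def] using (Real.hasDerivAt_exp (k*t)).comp t h
  have key : ∀ η > (0:ℝ), g T ≤ B₀ T + η * Real.exp ((-lam)*T) := by
    intro η hη
    obtain ⟨B, hB_def⟩ : ∃ B : ℝ → ℝ, B = fun t => B₀ t + η * Real.exp ((-lam)*t) := ⟨_, rfl⟩
    have hB_eval : ∀ t, B t = B₀ t + η * Real.exp ((-lam)*t) := fun t => by rw [hB_def]
    obtain ⟨B', hB'_def⟩ : ∃ B' : ℝ → ℝ,
        B' = fun t => -lam2 * B t + (c + η*Δ) * Real.exp ((-lam)*t) := ⟨_, rfl⟩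
    have hB'_eval : ∀ t, B' t = -lam2 * B t + (c + η*Δ) * Real.exp ((-lam)*t) :=
      fun t => by rw [hB'_def]
    obtain ⟨f', hf'_def⟩ : ∃ f' : ℝ → ℝ,
        f' = fun t => -lam2 * g t + c * Real.exp ((-lam)*t) := ⟨_, rfl⟩
    have hf'_eval : ∀ t, f' t = -lam2 * g t + c * Real.exp ((-lam)*t) :=
      fun t => by rw [hf'_def]
    have hB : ∀ s, HasDerivAt B (B' s) s := by
      intro s
      have h1 := ((hexp (-lam2) s).const_mul g0)
      have h2 := (((hexp (-lam) s).sub (hexp (-lam2) s)).const_mul (c/Δ))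
      have h3 := ((hexp (-lam) s).const_mul η)
      have h4 : HasDerivAt (fun t => g0 * Real.exp ((-lam2)*t)
          + (c/Δ) * (Real.exp ((-lam)*t) - Real.exp ((-lam2)*t)) + η * Real.exp ((-lam)*t))
          (g0 * ((-lam2) * Real.exp ((-lam2)*s))
            + (c/Δ) * ((-lam) * Real.exp ((-lam)*s) - (-lam2) * Real.exp ((-lam2)*s))
            + η * ((-lam) * Real.exp ((-lam)*s))) s := (h1.add h2).add h3
      have heq : B = fun t => g0 * Real.exp ((-lam2)*t)
          + (c/Δ) * (Real.exp ((-lam)*t) - Real.exp ((-lam2)*t)) + η * Real.exp ((-lam)*t) := by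
        funext t; rw [hB_eval, hB₀_eval]
      rw [heq]
      convert h4 using 1
      rw [hB'_eval, hB_eval, hB₀_eval]
      have hΔne : Δ ≠ 0 := ne_of_gt hΔpos
      field_simp
      rw [hΔ_def]
      ring
    have hcont : ContinuousOn g (Set.Icc 0 T) := by
      rw [hg_def]
      intro s hs
      have hx' := ((hx s hs.1).continuousWithinAt.mono
        (Set.Icc_subset_Ici_self : Set.Icc (0:ℝ) T ⊆ Set.Ici 0)).norm
      have hy' := ((hy s hs.1).continuousWithinAt.mono
        (Set.Icc_subset_Ici_self : Set.Icc (0:ℝ) T ⊆ Set.Ici 0)).norm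
      exact (hx'.const_smul a).add hy'
    have hinit : g 0 ≤ B 0 := by
      have hB0 : B 0 = g0 + η := by
        rw [hB_eval, hB₀_eval]; simp
      rw [hB0, hg_eval, hg0_def]
      linarith
    have hcontact : ∀ s ∈ Set.Ico (0:ℝ) T, g s = B s → f' s < B' s := by
      intro s hs hgB
      rw [hf'_eval, hB'_eval, ← hgB]
      have : 0 < η * Δ * Real.exp ((-lam)*s) := by positivity
      nlinarith [this]
    have hslope : ∀ s ∈ Set.Ico (0:ℝ) T, ∀ r, f' s < r → ∃ᶠ z in nhdsWithin s (Set.Ioi s), slope g s z < r := by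
      intro s hs r hr
      obtain ⟨ε, hε_def⟩ : ∃ e : ℝ, e = (r - f' s) / (2*(a+1)) := ⟨_, rfl⟩
      have hε : 0 < ε := by
        rw [hε_def]
        apply div_pos (by linarith) (by positivity)
      have hx' := slope_norm_le (cc := -1) (w := y s)
        (f := x) (t := s) (by
          have := (hx s hs.1).mono (Set.Ici_subset_Ici.mpr hs.1)
          simpa using this) hε
      have hy' := slope_norm_le (cc := 1-γ) (w := S s)
        (f := y) (t := s) ((hy s hs.1).mono (Set.Ici_subset_Ici.mpr hs.1)) hε
      have h3 : ∀ᶠ z in nhdsWithin s (Set.Ioi s), s < z := eventually_mem_nhdsWithin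
      apply Filter.Eventually.frequently
      filter_upwards [hx', hy', h3] with z hz1 hz2 hz3
      have hzs : 0 < z - s := by linarith
      rw [slope_def_field, div_lt_iff₀ hzs]
      have hgz : g z - g s ≤ (z-s) * (a * (-1 * ‖x s‖ + ‖y s‖ + ε)
          + ((1-γ) * ‖y s‖ + ‖S s‖ + ε)) := by
        rw [hg_eval, hg_eval]
        have e1 : a * ‖x z‖ - a * ‖x s‖ ≤ (z-s) * (a * (-1 * ‖x s‖ + ‖y s‖ + ε)) := by
          have := mul_le_mul_of_nonneg_left hz1 ha.le
          rw [mul_sub] at this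
          nlinarith [this]
        nlinarith [hz2]
      have halg : a * (-1 * ‖x s‖ + ‖y s‖ + ε) + ((1-γ) * ‖y s‖ + ‖S s‖ + ε) < r := by
        have hSs := hS' s hs.1
        have h1 : a * (-1 * ‖x s‖ + ‖y s‖) + ((1-γ) * ‖y s‖
            + ((γ-1-m) * ‖x s‖ + c * Real.exp ((-lam)*s))) ≤ f' s := by
          rw [hf'_eval, hg_eval]
          have hb1 : lam2 * (a * ‖x s‖) ≤ m/2 * ‖x s‖ := by
            nlinarith [norm_nonneg (x s), hl2a]
          have hb2 : lam2 * ‖y s‖ ≤ m/2 * ‖y s‖ := by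
            nlinarith [norm_nonneg (y s), hl2]
          nlinarith [norm_nonneg (x s), norm_nonneg (y s)]
        have h2 : (a+1) * ε < r - f' s := by
          have hrf : 0 < r - f' s := by linarith
          have hne : (2:ℝ)*(a+1) ≠ 0 := by positivity
          have heq : (a+1) * ε = (r - f' s)/2 := by
            rw [hε_def]; field_simp
          rw [heq]; linarith
        nlinarith [hSs]
      calc g z - g s ≤ (z-s) * (a * (-1 * ‖x s‖ + ‖y s‖ + ε)
            + ((1-γ) * ‖y s‖ + ‖S s‖ + ε)) := hgz
        _ < (z-s) * r := mul_lt_mul_of_pos_left halg hzs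
        _ = r * (z-s) := mul_comm _ _
    have main := image_le_of_liminf_slope_right_lt_deriv_boundary (a := 0) (b := T)
      hcont hslope hinit hB hcontact
    have hmm := main (Set.right_mem_Icc.mpr hT)
    rwa [hB_eval] at hmm
  have hlim : g T ≤ B₀ T := by
    apply le_of_forall_pos_le_add
    intro ε hε
    have hk := key ε hε
    have hexpT : Real.exp ((-lam)*T) ≤ 1 := by
      apply Real.exp_le_one_iff.mpr
      nlinarith
    nlinarith [Real.exp_pos ((-lam)*T), hε]
  have hee : Real.exp ((-lam2)*T) ≤ Real.exp ((-lam)*T) := by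
    apply Real.exp_le_exp.mpr
    nlinarith
  have hfinal : g T ≤ (g0 + c/Δ) * Real.exp ((-lam)*T) := by
    refine hlim.trans ?_
    rw [hB₀_eval]
    have h1 : g0 * Real.exp ((-lam2)*T) ≤ g0 * Real.exp ((-lam)*T) :=
      mul_le_mul_of_nonneg_left hee hg0
    have h2 : 0 ≤ c/Δ := by positivity
    nlinarith [Real.exp_pos ((-lam2)*T), Real.exp_pos ((-lam)*T)]
  rw [hg_eval, hg0_def, hΔ_def, hlam2_def, hlam_def, ha_def] at hfinal
  exact hfinal

set_option maxHeartbeats 1000000 in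
/-- coupling estimate between two tangent processes `Q' = P, P' = −H(t)Q − γP`
and `Q̃' = P̃, P̃' = −H̃(t)Q̃ − γP̃` with the same initial values, when
`mI ⪯ H(t), H̃(t) ⪯ C₁I`, `‖H(t) − H̃(t)‖_F ≤ δ` and `γ ≥ C₁ + 1`; the constants
`C, λ > 0` depend only on `m, C₁, γ`.  Here `‖·‖` is the Frobenius norm. -/
theorem statement5 (d : ℕ) (hd : 1 ≤ d) (m C₁ γ δ : ℝ) (hm : 0 < m) (hmC : m ≤ C₁)
    (hγ : C₁ + 1 ≤ γ) (hδ : 0 ≤ δ) :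
    ∃ C > (0 : ℝ), ∃ lam > (0 : ℝ), ∀ H H' Q P Q' P' : ℝ → Matrix (Fin d) (Fin d) ℝ,
      ContinuousOn H (Set.Ici 0) → ContinuousOn H' (Set.Ici 0) →
      (∀ t ≥ (0 : ℝ), (H t).IsSymm) → (∀ t ≥ (0 : ℝ), (H' t).IsSymm) →
      (∀ t ≥ (0 : ℝ), (H t - m • (1 : Matrix (Fin d) (Fin d) ℝ)).PosSemidef) →
      (∀ t ≥ (0 : ℝ), (C₁ • (1 : Matrix (Fin d) (Fin d) ℝ) - H t).PosSemidef) →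
      (∀ t ≥ (0 : ℝ), (H' t - m • (1 : Matrix (Fin d) (Fin d) ℝ)).PosSemidef) →
      (∀ t ≥ (0 : ℝ), (C₁ • (1 : Matrix (Fin d) (Fin d) ℝ) - H' t).PosSemidef) →
      (∀ t ≥ (0 : ℝ), ‖H t - H' t‖ ≤ δ) →
      (∀ t ≥ (0 : ℝ), HasDerivWithinAt Q (P t) (Set.Ici 0) t) →
      (∀ t ≥ (0 : ℝ), HasDerivWithinAt P (-(H t * Q t) - γ • P t) (Set.Ici 0) t) →
      (∀ t ≥ (0 : ℝ), HasDerivWithinAt Q' (P' t) (Set.Ici 0) t) →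
      (∀ t ≥ (0 : ℝ), HasDerivWithinAt P' (-(H' t * Q' t) - γ • P' t) (Set.Ici 0) t) →
      Q 0 = Q' 0 → P 0 = P' 0 →
      ∀ t ≥ (0 : ℝ), ‖Q t - Q' t‖ + ‖P t - P' t‖ ≤
        C * Real.exp (-lam * t) * (‖Q 0‖ + ‖P 0‖) * δ := by
  have hm1γ : m + 1 ≤ γ := by linarith
  have hγ1 : (1:ℝ) < γ := by linarith
  have hγ0 : (0:ℝ) < γ := by linarith
  obtain ⟨a, ha_def⟩ : ∃ a : ℝ, a = γ - 1 - m/2 := ⟨_, rfl⟩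
  obtain ⟨lam, hlam_def⟩ : ∃ l : ℝ, l = m/(2*γ) := ⟨_, rfl⟩
  obtain ⟨lam2, hlam2_def⟩ : ∃ l : ℝ, l = min (m/(2*a)) (m/2) := ⟨_, rfl⟩
  have ha : 0 < a := by rw [ha_def]; linarith
  have hlam : 0 < lam := by rw [hlam_def]; positivity
  have hΔ : lam < lam2 := by
    rw [hlam2_def, hlam_def, lt_min_iff]
    constructor
    · apply div_lt_div_of_pos_left hm (by positivity)
      linarith
    · rw [div_lt_div_iff₀ (by positivity) (by norm_num : (0:ℝ) < 2)]
      nlinarith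
  obtain ⟨Δ, hΔ_def⟩ : ∃ D : ℝ, D = lam2 - lam := ⟨_, rfl⟩
  have hΔpos : 0 < Δ := by rw [hΔ_def]; linarith
  refine ⟨(1+2/a)*(a+1)/(a*Δ), ?_, lam, hlam, ?_⟩
  · apply div_pos (mul_pos (by positivity) (by linarith)) (mul_pos ha hΔpos)
  intro H Hm Q P Qm Pm _ _ _ _ hpm hpC hpmm hpCm hdel hQ hP hQm hPm hQ0 hP0
  -- key operator bound
  have key_bound : ∀ (A : Matrix (Fin d) (Fin d) ℝ),
      (A - m • (1 : Matrix (Fin d) (Fin d) ℝ)).PosSemidef →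
      (C₁ • (1 : Matrix (Fin d) (Fin d) ℝ) - A).PosSemidef →
      ∀ B : Matrix (Fin d) (Fin d) ℝ, ‖(γ-1) • B - A * B‖ ≤ (γ-1-m) * ‖B‖ := by
    intro A h1 h2 B
    have hrw : (γ-1) • B - A * B = ((γ-1) • (1 : Matrix (Fin d) (Fin d) ℝ) - A) * B := by
      rw [Matrix.sub_mul, smul_mul_assoc, one_mul]
    rw [hrw]
    apply frob_mul_le_of_psd' (c := γ-1-m) (by linarith) ?_ ?_ B
    · have he : (γ-1) • (1 : Matrix (Fin d) (Fin d) ℝ) - A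
          = (C₁ • (1 : Matrix (Fin d) (Fin d) ℝ) - A)
            + (γ-1-C₁) • (1 : Matrix (Fin d) (Fin d) ℝ) := by module
      rw [he]
      exact h2.add (psd_smul_one' (by linarith))
    · have he : (γ-1-m) • (1 : Matrix (Fin d) (Fin d) ℝ)
          - ((γ-1) • (1 : Matrix (Fin d) (Fin d) ℝ) - A)
          = A - m • (1 : Matrix (Fin d) (Fin d) ℝ) := by module
      rw [he]
      exact h1
  -- Step A : decay of the primed (tilde) trajectory
  have hxA : ∀ t ≥ (0:ℝ), HasDerivWithinAt Qm ((-1:ℝ) • Qm t + (Pm t + Qm t)) (Set.Ici 0) t := by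
    intro t ht
    have e : (-1:ℝ) • Qm t + (Pm t + Qm t) = Pm t := by module
    rw [e]; exact hQm t ht
  have hyA : ∀ t ≥ (0:ℝ), HasDerivWithinAt (fun s => Pm s + Qm s)
      ((1-γ) • (Pm t + Qm t) + ((γ-1) • Qm t - Hm t * Qm t)) (Set.Ici 0) t := by
    intro t ht
    have h := (hPm t ht).add (hQm t ht)
    have e : (1-γ) • (Pm t + Qm t) + ((γ-1) • Qm t - Hm t * Qm t)
        = (-(Hm t * Qm t) - γ • Pm t) + Pm t := by module
    rw [e]; exact h
  have hSA : ∀ t ≥ (0:ℝ), ‖(γ-1) • Qm t - Hm t * Qm t‖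
      ≤ (γ-1-m) * ‖Qm t‖ + 0 * Real.exp ((-(m/(2*γ))) * t) := by
    intro t ht
    have := key_bound (Hm t) (hpmm t ht) (hpCm t ht) (Qm t)
    simpa using this
  have stepA := gronwall_core (x := Qm) (y := fun s => Pm s + Qm s)
    (S := fun s => (γ-1) • Qm s - Hm s * Qm s) hm hm1γ le_rfl hxA hyA hSA
  rw [← ha_def, ← hlam_def] at stepA
  rw [show m/(2*a) = m/(2*a) from rfl] at stepA
  rw [← hlam2_def, ← hΔ_def] at stepA
  obtain ⟨CA, hCA_def⟩ : ∃ r : ℝ, r = a * ‖Qm 0‖ + ‖Pm 0 + Qm 0‖ + 0 / Δ := ⟨_, rfl⟩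
  rw [← hCA_def] at stepA
  have hCA0 : 0 ≤ CA := by rw [hCA_def]; positivity
  have hQmbound : ∀ t ≥ (0:ℝ), ‖Qm t‖ ≤ CA / a * Real.exp (-lam * t) := by
    intro t ht
    have h := stepA t ht
    rw [div_mul_eq_mul_div, le_div_iff₀ ha]
    nlinarith [norm_nonneg (Pm t + Qm t), h]
  -- Step B : the coupling estimate
  obtain ⟨c₂, hc₂_def⟩ : ∃ r : ℝ, r = δ * CA / a := ⟨_, rfl⟩
  have hc₂ : 0 ≤ c₂ := by rw [hc₂_def]; positivity
  have hxB : ∀ t ≥ (0:ℝ), HasDerivWithinAt (fun s => Q s - Qm s)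
      ((-1:ℝ) • (Q t - Qm t) + ((P t + Q t) - (Pm t + Qm t))) (Set.Ici 0) t := by
    intro t ht
    have h := (hQ t ht).sub (hQm t ht)
    have e : (-1:ℝ) • (Q t - Qm t) + ((P t + Q t) - (Pm t + Qm t)) = P t - Pm t := by module
    rw [e]; exact h
  have hyB : ∀ t ≥ (0:ℝ), HasDerivWithinAt (fun s => (P s + Q s) - (Pm s + Qm s))
      ((1-γ) • ((P t + Q t) - (Pm t + Qm t))
        + (((γ-1) • (Q t - Qm t) - H t * (Q t - Qm t)) + (Hm t - H t) * Qm t))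
      (Set.Ici 0) t := by
    intro t ht
    have h := ((hP t ht).add (hQ t ht)).sub ((hPm t ht).add (hQm t ht))
    have e : (1-γ) • ((P t + Q t) - (Pm t + Qm t))
        + (((γ-1) • (Q t - Qm t) - H t * (Q t - Qm t)) + (Hm t - H t) * Qm t)
        = (-(H t * Q t) - γ • P t + P t) - (-(Hm t * Qm t) - γ • Pm t + Pm t) := by
      rw [Matrix.mul_sub, Matrix.sub_mul]
      module
    rw [e]; exact h
  have hSB : ∀ t ≥ (0:ℝ), ‖((γ-1) • (Q t - Qm t) - H t * (Q t - Qm t)) + (Hm t - H t) * Qm t‖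
      ≤ (γ-1-m) * ‖Q t - Qm t‖ + c₂ * Real.exp ((-(m/(2*γ))) * t) := by
    intro t ht
    have h1 := key_bound (H t) (hpm t ht) (hpC t ht) (Q t - Qm t)
    have h2 : ‖(Hm t - H t) * Qm t‖ ≤ δ * ‖Qm t‖ := by
      calc ‖(Hm t - H t) * Qm t‖ ≤ ‖Hm t - H t‖ * ‖Qm t‖ := frob_norm_mul_le _ _
        _ ≤ δ * ‖Qm t‖ := by
            apply mul_le_mul_of_nonneg_right _ (norm_nonneg _)
            rw [norm_sub_rev]
            exact hdel t ht
    have h3 : δ * ‖Qm t‖ ≤ c₂ * Real.exp (-lam * t) := by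
      have hq := hQmbound t ht
      calc δ * ‖Qm t‖ ≤ δ * (CA / a * Real.exp (-lam * t)) :=
            mul_le_mul_of_nonneg_left hq hδ
        _ = c₂ * Real.exp (-lam * t) := by rw [hc₂_def]; ring
    rw [← hlam_def]
    calc ‖((γ-1) • (Q t - Qm t) - H t * (Q t - Qm t)) + (Hm t - H t) * Qm t‖
        ≤ ‖(γ-1) • (Q t - Qm t) - H t * (Q t - Qm t)‖ + ‖(Hm t - H t) * Qm t‖ := norm_add_le _ _
      _ ≤ (γ-1-m) * ‖Q t - Qm t‖ + c₂ * Real.exp (-lam * t) := by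
          have := h2.trans h3
          linarith
  have stepB := gronwall_core (x := fun s => Q s - Qm s)
    (y := fun s => (P s + Q s) - (Pm s + Qm s))
    (S := fun s => ((γ-1) • (Q s - Qm s) - H s * (Q s - Qm s)) + (Hm s - H s) * Qm s)
    hm hm1γ hc₂ hxB hyB hSB
  rw [← ha_def, ← hlam_def, ← hlam2_def, ← hΔ_def] at stepB
  have hx0 : Q 0 - Qm 0 = 0 := by rw [hQ0]; simp
  have hy0 : (P 0 + Q 0) - (Pm 0 + Qm 0) = 0 := by rw [hQ0, hP0]; simp
  rw [hx0, hy0] at stepB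
  simp only [norm_zero, mul_zero, add_zero, zero_add] at stepB
  -- final assembly
  intro t ht
  have hB := stepB t ht
  have hexp : 0 < Real.exp (-lam * t) := Real.exp_pos _
  obtain ⟨G, hG_def⟩ : ∃ r : ℝ, r = c₂ / Δ * Real.exp (-lam * t) := ⟨_, rfl⟩
  rw [← hG_def] at hB
  have hG0 : 0 ≤ G := by rw [hG_def]; positivity
  have hx2 : ‖Q t - Qm t‖ ≤ G / a := by
    rw [le_div_iff₀ ha]
    nlinarith [norm_nonneg ((P t + Q t) - (Pm t + Qm t)), hB]
  have hy2 : ‖(P t + Q t) - (Pm t + Qm t)‖ ≤ G := by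
    nlinarith [norm_nonneg (Q t - Qm t), hB, ha]
  have hPdiff : ‖P t - Pm t‖ ≤ ‖(P t + Q t) - (Pm t + Qm t)‖ + ‖Q t - Qm t‖ := by
    have e : P t - Pm t = ((P t + Q t) - (Pm t + Qm t)) - (Q t - Qm t) := by module
    rw [e]
    exact norm_sub_le _ _
  have htotal : ‖Q t - Qm t‖ + ‖P t - Pm t‖ ≤ (1 + 2/a) * G := by
    have h2a : 2/a * G = 2 * (G/a) := by field_simp
    nlinarith [hx2, hy2, hPdiff]
  -- bound G
  have hCA_le : CA ≤ (a+1) * (‖Q 0‖ + ‖P 0‖) := by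
    rw [hCA_def, ← hQ0, ← hP0]
    have h1 : ‖P 0 + Q 0‖ ≤ ‖P 0‖ + ‖Q 0‖ := norm_add_le _ _
    have h2 : (0:ℝ)/Δ = 0 := zero_div _
    rw [h2]
    nlinarith [norm_nonneg (Q 0), norm_nonneg (P 0)]
  have h2apos : (0:ℝ) < 2/a := div_pos (by norm_num) ha
  have hG_le : G ≤ (a+1) * (‖Q 0‖ + ‖P 0‖) * δ / (a * Δ) * Real.exp (-lam * t) := by
    rw [hG_def, hc₂_def]
    apply mul_le_mul_of_nonneg_right _ hexp.le
    rw [div_div]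
    apply (div_le_div_iff_of_pos_right (by positivity)).mpr
    nlinarith [mul_le_mul_of_nonneg_left hCA_le hδ]
  calc ‖Q t - Qm t‖ + ‖P t - Pm t‖ ≤ (1 + 2/a) * G := htotal
    _ ≤ (1 + 2/a) * ((a+1) * (‖Q 0‖ + ‖P 0‖) * δ / (a * Δ) * Real.exp (-lam * t)) :=
        mul_le_mul_of_nonneg_left hG_le (by linarith)
    _ = (1+2/a)*(a+1)/(a*Δ) * Real.exp (-lam * t) * (‖Q 0‖ + ‖P 0‖) * δ := by
        field_simp
end

section
/- Let λ, K > 0 and let G : [0,∞) → ℝ be differentiable with G(t) ≥ 0 for all t ≥ 0, G(0) = 0, and G'(t) ≤ −λG(t) + K·√(G(t)) for all t ≥ 0. Then √(G(t)) ≤ K/λ for all t ≥ 0. -/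
/-- if `G : [0,∞) → ℝ` is differentiable with `G ≥ 0`, `G(0) = 0` and
`G'(t) ≤ −λG(t) + K·√(G(t))` for all `t ≥ 0`, then `√(G(t)) ≤ K/λ` for all `t ≥ 0`. -/
theorem statement6 (lam K : ℝ) (hlam : 0 < lam) (hK : 0 < K) (G : ℝ → ℝ)
    (hG0 : G 0 = 0)
    (hGnn : ∀ t ≥ (0 : ℝ), 0 ≤ G t)
    (hdiff : ∀ t ≥ (0 : ℝ), DifferentiableWithinAt ℝ G (Set.Ici 0) t)
    (hderiv : ∀ t ≥ (0 : ℝ),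
      derivWithin G (Set.Ici 0) t ≤ -lam * G t + K * Real.sqrt (G t)) :
    ∀ t ≥ (0 : ℝ), Real.sqrt (G t) ≤ K / lam := by
  intro t ht
  refine le_of_forall_pos_le_add ?_
  intro ε hε
  set c : ℝ := K / lam + ε with hc
  have hcpos : 0 < c := by positivity
  have key : G t ≤ c ^ 2 := by
    have hcont : ContinuousOn G (Set.Icc 0 t) := fun x hx =>
      ((hdiff x hx.1).continuousWithinAt).mono (fun y hy => hy.1)
    have hf' : ∀ x ∈ Set.Ico (0:ℝ) t,
        HasDerivWithinAt G (derivWithin G (Set.Ici 0) x) (Set.Ici x) x := fun x hx =>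
      ((hdiff x hx.1).hasDerivWithinAt).mono (Set.Ici_subset_Ici.2 hx.1)
    have bound : ∀ x ∈ Set.Ico (0:ℝ) t, G x = c ^ 2 →
        derivWithin G (Set.Ici 0) x < 0 := by
      intro x hx hGx
      have h1 := hderiv x hx.1
      rw [hGx] at h1
      have hs : Real.sqrt (c ^ 2) = c := by
        rw [Real.sqrt_sq hcpos.le]
      rw [hs] at h1
      have : -lam * c ^ 2 + K * c = c * (K - lam * c) := by ring
      rw [this] at h1
      have h2 : K - lam * c = -(lam * ε) := by
        have h3 : lam * (K / lam) = K := by field_simp [hlam.ne']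
        rw [hc]
        linear_combination -h3
      rw [h2] at h1
      have : c * -(lam * ε) < 0 := by
        have : 0 < lam * ε := by positivity
        nlinarith
      linarith
    have := image_le_of_deriv_right_lt_deriv_boundary' (B := fun _ => c ^ 2)
      (B' := fun _ => 0) hcont hf' (by rw [hG0]; positivity) continuousOn_const
      (fun x _ => hasDerivWithinAt_const x _ _) bound
    exact this ⟨ht, le_refl t⟩
  calc Real.sqrt (G t) ≤ Real.sqrt (c ^ 2) := Real.sqrt_le_sqrt key
    _ = c := Real.sqrt_sq hcpos.le
end
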